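/- arXiv:2509.04026 — 4 statements merged into one kernel-verified Lean document; each statement's English description precedes it below -/
import Mathlib

section
/- Let k and d ≥ 2 be positive integers and set ρ(k,d) = (2(d−1)²(2d−1)^{2d−2})^{k−1}. Let G be a K_{1,d}-free graph with V(G) = V(P) ∪ A, where P is an induced path of G and A = N(P) is an independent set of cardinality at least ρ(k,d). Then there exist B = {b₁, b₂, …, b_k} ⊆ A and a subpath Q of P such that the sets {N(bᵢ) ∩ V(Q)}_{i∈[k]} appear in order along Q. -/
open SimpleGraph

/-- A set of vertices is independent in `G`. -/
def IsIndep {V : Type} (G : SimpleGraph V) (S : Set V) : Prop :=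
  ∀ u ∈ S, ∀ v ∈ S, u ≠ v → ¬ G.Adj u v

/-- The independence number of the subgraph of `G` induced by `S`. -/
noncomputable def alphaSet {V : Type} [Fintype V] (G : SimpleGraph V) (S : Set V) : ℕ :=
  sSup {n : ℕ | ∃ I : Finset V, ↑I ⊆ S ∧ IsIndep G ↑I ∧ I.card = n}

/-- The open neighborhood of a vertex set `X`. -/
def nbr {V : Type} (G : SimpleGraph V) (X : Set V) : Set V :=
  {v | v ∉ X ∧ ∃ x ∈ X, G.Adj v x}

/-- The closed neighborhood of a vertex set `X`. -/
def clNbr {V : Type} (G : SimpleGraph V) (X : Set V) : Set V :=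
  X ∪ nbr G X

/-- Two vertex sets `X`, `Y` are adjacent if `N[X] ∩ Y ≠ ∅`. -/
def SetsAdj {V : Type} (G : SimpleGraph V) (X Y : Set V) : Prop :=
  (clNbr G X ∩ Y).Nonempty

/-- `G` has no induced subgraph isomorphic to the star `K_{1,d}`. -/
def K1dFree {V : Type} (d : ℕ) (G : SimpleGraph V) : Prop :=
  IsEmpty (completeBipartiteGraph (Fin 1) (Fin d) ↪g G)

/-- `H` is an induced minor of `G` (obtained by vertex deletions and edge contractions),
witnessed by a family of nonempty, connected, pairwise disjoint branch sets. -/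
def InducedMinor {V W : Type} (G : SimpleGraph V) (H : SimpleGraph W) : Prop :=
  ∃ φ : W → Set V,
    (∀ w, (G.induce (φ w)).Connected) ∧
    (∀ w₁ w₂, w₁ ≠ w₂ → Disjoint (φ w₁) (φ w₂)) ∧
    (∀ w₁ w₂, w₁ ≠ w₂ → (H.Adj w₁ w₂ ↔ ∃ u ∈ φ w₁, ∃ v ∈ φ w₂, G.Adj u v))

/-- A tree-decomposition of `G`. -/
structure TreeDecomp {V : Type} (G : SimpleGraph V) where
  n : ℕ
  T : SimpleGraph (Fin n)
  conn : T.Connected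
  acyc : T.IsAcyclic
  bag : Fin n → Set V
  bag_vertex : ∀ v : V, ∃ t, v ∈ bag t
  bag_edge : ∀ u v : V, G.Adj u v → ∃ t, u ∈ bag t ∧ v ∈ bag t
  bag_subtree : ∀ v : V, (T.induce {t | v ∈ bag t}).Connected

/-- The tree-independence number of a finite graph `G`. -/
noncomputable def atw {V : Type} [Fintype V] (G : SimpleGraph V) : ℕ :=
  sInf {c : ℕ | ∃ D : TreeDecomp G, ∀ t : Fin D.n, alphaSet G (D.bag t) ≤ c}

/-- `S` is a separator between `X` and `Y`: there is no path with one endpoint in `X`,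
the other endpoint in `Y`, and all internal vertices outside `S ∪ X ∪ Y`. -/
def Separates {V : Type} (G : SimpleGraph V) (X Y S : Set V) : Prop :=
  ¬ ∃ (x y : V) (w : G.Walk x y), x ∈ X ∧ y ∈ Y ∧ w.IsPath ∧
      ∀ v ∈ w.support, v ≠ x → v ≠ y → v ∉ S ∧ v ∉ X ∧ v ∉ Y

/-- `f 0, …, f (n-1)` are the vertices, in order, of an induced path in `G`. -/
def IsIndPathOn {V : Type} (G : SimpleGraph V) (f : ℕ → V) (n : ℕ) : Prop :=
  (∀ a b, a < n → b < n → f a = f b → a = b) ∧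
  (∀ a b, a < n → b < n → (G.Adj (f a) (f b) ↔ (a + 1 = b ∨ b + 1 = a)))

/-- The vertex set of the path (or cycle) `f 0, …, f (n-1)`. -/
def pathSet {V : Type} (f : ℕ → V) (n : ℕ) : Set V := f '' {a | a < n}

/-- `f 0, …, f (n-1)` are the vertices, in cyclic order, of an induced cycle in `G`. -/
def IsIndCycleOn {V : Type} (G : SimpleGraph V) (f : ℕ → V) (n : ℕ) : Prop :=
  3 ≤ n ∧ (∀ a b, a < n → b < n → f a = f b → a = b) ∧
  (∀ a b, a < n → b < n → (G.Adj (f a) (f b) ↔ ((a + 1) % n = b ∨ (b + 1) % n = a)))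

/-- The sets `A 0, …, A (k-1)` appear in order along the path `f 0, …, f (n-1)`:
they are nonempty and there are indices `0 = x 0 < x 1 < … < x k = n` such that
`A i` is contained in the block `f (x i), …, f (x (i+1) - 1)`. -/
def AppearInOrderAlong {V : Type} (f : ℕ → V) (n k : ℕ) (A : ℕ → Set V) : Prop :=
  (∀ i < k, (A i).Nonempty) ∧
  ∃ x : ℕ → ℕ, x 0 = 0 ∧ x k = n ∧ (∀ i < k, x i < x (i + 1)) ∧
    ∀ i < k, A i ⊆ f '' {a | x i ≤ a ∧ a < x (i + 1)}

/-- The `k`-ladder: two disjoint paths with `k` vertices each, the `i`-th vertices joined. -/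
def ladderGraph (k : ℕ) : SimpleGraph (Fin 2 × Fin k) :=
  SimpleGraph.fromRel fun p q =>
    (p.1 = q.1 ∧ p.2.val + 1 = q.2.val) ∨ (p.2 = q.2 ∧ p.1 ≠ q.1)

/-- The `k`-skinny ladder: the `k`-ladder with every rung subdivided exactly once. -/
def skinnyLadder (k : ℕ) : SimpleGraph ((Fin 2 × Fin k) ⊕ Fin k) :=
  SimpleGraph.fromRel fun p q =>
    match p, q with
    | Sum.inl (i, a), Sum.inl (j, b) => i = j ∧ a.val + 1 = b.val
    | Sum.inl (_, a), Sum.inr b => a = b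
    | _, _ => False

/-- The wheel `W_ℓ`: a cycle on `ℓ` vertices plus a hub joined to all of them. -/
def wheelGraph (ℓ : ℕ) : SimpleGraph (Fin ℓ ⊕ Unit) :=
  SimpleGraph.fromRel fun p q =>
    match p, q with
    | Sum.inl a, Sum.inl b => (a.val + 1) % ℓ = b.val
    | Sum.inl _, Sum.inr _ => True
    | _, _ => False

/-- The theta graph with two ends and three internally disjoint paths having
`a`, `b`, `c ≥ 1` internal vertices respectively (so lengths `a+1`, `b+1`, `c+1`). -/
def thetaGraph (a b c : ℕ) : SimpleGraph (Fin 2 ⊕ (Fin a ⊕ Fin b ⊕ Fin c)) :=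
  SimpleGraph.fromRel fun p q =>
    match p, q with
    | Sum.inl u, Sum.inr (Sum.inl x) => (u = 0 ∧ x.val = 0) ∨ (u = 1 ∧ x.val = a - 1)
    | Sum.inl u, Sum.inr (Sum.inr (Sum.inl x)) => (u = 0 ∧ x.val = 0) ∨ (u = 1 ∧ x.val = b - 1)
    | Sum.inl u, Sum.inr (Sum.inr (Sum.inr x)) => (u = 0 ∧ x.val = 0) ∨ (u = 1 ∧ x.val = c - 1)
    | Sum.inr (Sum.inl x), Sum.inr (Sum.inl y) => x.val + 1 = y.val
    | Sum.inr (Sum.inr (Sum.inl x)), Sum.inr (Sum.inr (Sum.inl y)) => x.val + 1 = y.val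
    | Sum.inr (Sum.inr (Sum.inr x)), Sum.inr (Sum.inr (Sum.inr y)) => x.val + 1 = y.val
    | _, _ => False

/-- The prism graph with two triangles `v₁v₂v₃`, `w₁w₂w₃` and three disjoint paths having
`a`, `b`, `c` internal vertices respectively (so lengths `a+1`, `b+1`, `c+1`). -/
def prismGraph (a b c : ℕ) : SimpleGraph (Fin 3 ⊕ (Fin 3 ⊕ (Fin a ⊕ Fin b ⊕ Fin c))) :=
  SimpleGraph.fromRel fun p q =>
    match p, q with
    | Sum.inl _, Sum.inl _ => True
    | Sum.inr (Sum.inl _), Sum.inr (Sum.inl _) => True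
    | Sum.inl i, Sum.inr (Sum.inl j) =>
        i = j ∧ (if i = (0 : Fin 3) then a = 0 else if i = 1 then b = 0 else c = 0)
    | Sum.inl i, Sum.inr (Sum.inr (Sum.inl x)) => i = 0 ∧ x.val = 0
    | Sum.inl i, Sum.inr (Sum.inr (Sum.inr (Sum.inl x))) => i = 1 ∧ x.val = 0
    | Sum.inl i, Sum.inr (Sum.inr (Sum.inr (Sum.inr x))) => i = 2 ∧ x.val = 0
    | Sum.inr (Sum.inl i), Sum.inr (Sum.inr (Sum.inl x)) => i = 0 ∧ x.val = a - 1
    | Sum.inr (Sum.inl i), Sum.inr (Sum.inr (Sum.inr (Sum.inl x))) => i = 1 ∧ x.val = b - 1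
    | Sum.inr (Sum.inl i), Sum.inr (Sum.inr (Sum.inr (Sum.inr x))) => i = 2 ∧ x.val = c - 1
    | Sum.inr (Sum.inr (Sum.inl x)), Sum.inr (Sum.inr (Sum.inl y)) => x.val + 1 = y.val
    | Sum.inr (Sum.inr (Sum.inr (Sum.inl x))), Sum.inr (Sum.inr (Sum.inr (Sum.inl y))) =>
        x.val + 1 = y.val
    | Sum.inr (Sum.inr (Sum.inr (Sum.inr x))), Sum.inr (Sum.inr (Sum.inr (Sum.inr y))) =>
        x.val + 1 = y.val
    | _, _ => False

/-- `G` contains a `k`-long theta as an induced subgraph. -/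
def ContainsLongTheta {V : Type} (G : SimpleGraph V) (k : ℕ) : Prop :=
  ∃ a b c : ℕ, 1 ≤ a ∧ 1 ≤ b ∧ 1 ≤ c ∧ k ≤ a + 1 ∧ k ≤ b + 1 ∧ k ≤ c + 1 ∧
    Nonempty (thetaGraph a b c ↪g G)

/-- `G` contains a `k`-long prism as an induced subgraph. -/
def ContainsLongPrism {V : Type} (G : SimpleGraph V) (k : ℕ) : Prop :=
  ∃ a b c : ℕ, k ≤ a + 1 ∧ k ≤ b + 1 ∧ k ≤ c + 1 ∧
    Nonempty (prismGraph a b c ↪g G)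

/-- Data for a (shuffled) rope ladder: two rail paths `p₁`, `p₂` (with `n₁`, `n₂` vertices)
and rung paths `φ i` (with `m i` vertices each). -/
structure RopeLadderData (V : Type) where
  n₁ : ℕ
  n₂ : ℕ
  p₁ : ℕ → V
  p₂ : ℕ → V
  m : ℕ → ℕ
  φ : ℕ → ℕ → V

def RopeLadderData.rail₁ {V : Type} (L : RopeLadderData V) : Set V := pathSet L.p₁ L.n₁
def RopeLadderData.rail₂ {V : Type} (L : RopeLadderData V) : Set V := pathSet L.p₂ L.n₂
def RopeLadderData.rung {V : Type} (L : RopeLadderData V) (i : ℕ) : Set V :=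
  pathSet (L.φ i) (L.m i)
/-- The endpoint `φ₁ⁱ` of the `i`-th rung path. -/
def RopeLadderData.top {V : Type} (L : RopeLadderData V) (i : ℕ) : V := L.φ i 0
/-- The endpoint `φ₂ⁱ` of the `i`-th rung path. -/
def RopeLadderData.bot {V : Type} (L : RopeLadderData V) (i : ℕ) : V := L.φ i (L.m i - 1)

/-- The data `L` forms a `k`-shuffled-rope-ladder configuration in `G`. -/
structure IsShuffledConfig {V : Type} (G : SimpleGraph V) (k : ℕ) (L : RopeLadderData V) :
    Prop where
  pos₁ : 0 < L.n₁
  pos₂ : 0 < L.n₂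
  posm : ∀ i < k, 0 < L.m i
  path₁ : IsIndPathOn G L.p₁ L.n₁
  path₂ : IsIndPathOn G L.p₂ L.n₂
  pathr : ∀ i < k, IsIndPathOn G (L.φ i) (L.m i)
  disj₁₂ : Disjoint L.rail₁ L.rail₂
  disj₁r : ∀ i < k, Disjoint L.rail₁ (L.rung i)
  disj₂r : ∀ i < k, Disjoint L.rail₂ (L.rung i)
  disjrr : ∀ i < k, ∀ j < k, i ≠ j → Disjoint (L.rung i) (L.rung j)
  nonadj₁₂ : ¬ SetsAdj G L.rail₁ L.rail₂
  nonadjrr : ∀ i < k, ∀ j < k, i ≠ j → ¬ SetsAdj G (L.rung i) (L.rung j)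
  rung₁eq : ∀ i < k, nbr G (L.rung i) ∩ L.rail₁ = nbr G {L.top i} ∩ L.rail₁
  rung₁ne : ∀ i < k, (nbr G (L.rung i) ∩ L.rail₁).Nonempty
  rung₂eq : ∀ i < k, nbr G (L.rung i) ∩ L.rail₂ = nbr G {L.bot i} ∩ L.rail₂
  rung₂ne : ∀ i < k, (nbr G (L.rung i) ∩ L.rail₂).Nonempty

/-- The data `L` forms a `k`-rope-ladder configuration in `G`: a shuffled configuration whose
rung attachments appear in order along both rails. -/
def IsRopeConfig {V : Type} (G : SimpleGraph V) (k : ℕ) (L : RopeLadderData V) : Prop :=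
  IsShuffledConfig G k L ∧
  AppearInOrderAlong L.p₁ L.n₁ k (fun i => nbr G {L.top i} ∩ L.rail₁) ∧
  AppearInOrderAlong L.p₂ L.n₂ k (fun i => nbr G {L.bot i} ∩ L.rail₂)

/-- Every vertex of the ambient graph lies on one of the paths of `L`. -/
def LadderCovers {V : Type} (k : ℕ) (L : RopeLadderData V) : Prop :=
  ∀ v : V, v ∈ L.rail₁ ∪ L.rail₂ ∪ ⋃ i ∈ Set.Iio k, L.rung i

/-- `G` is (exactly) a `k`-shuffled rope ladder. -/
def IsShuffledRopeLadderGraph {V : Type} (G : SimpleGraph V) (k : ℕ) : Prop :=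
  ∃ L : RopeLadderData V, IsShuffledConfig G k L ∧ LadderCovers k L

/-- `G` is (exactly) a `k`-rope ladder. -/
def IsRopeLadderGraph {V : Type} (G : SimpleGraph V) (k : ℕ) : Prop :=
  ∃ L : RopeLadderData V, IsRopeConfig G k L ∧ LadderCovers k L

/-- A `k`-`H`-rope-ladder configuration in `G`, where the rail subgraph has vertex set `W`,
the rail path is `p` (with `n` vertices) and the rung paths are `φ i` (with `m i` vertices). -/
structure IsHRopeConfig {V : Type} (G : SimpleGraph V) (k : ℕ) (W : Set V)
    (p : ℕ → V) (n : ℕ) (m : ℕ → ℕ) (φ : ℕ → ℕ → V) : Prop where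
  posn : 0 < n
  posm : ∀ i < k, 0 < m i
  pathP : IsIndPathOn G p n
  pathr : ∀ i < k, IsIndPathOn G (φ i) (m i)
  disjWP : Disjoint W (pathSet p n)
  disjWr : ∀ i < k, Disjoint W (pathSet (φ i) (m i))
  disjPr : ∀ i < k, Disjoint (pathSet p n) (pathSet (φ i) (m i))
  disjrr : ∀ i < k, ∀ j < k, i ≠ j → Disjoint (pathSet (φ i) (m i)) (pathSet (φ j) (m j))
  nonadjWP : ¬ SetsAdj G W (pathSet p n)
  nonadjrr : ∀ i < k, ∀ j < k, i ≠ j →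
    ¬ SetsAdj G (pathSet (φ i) (m i)) (pathSet (φ j) (m j))
  rungWeq : ∀ i < k, W ∩ nbr G (pathSet (φ i) (m i)) = W ∩ nbr G {φ i 0}
  rungWne : ∀ i < k, (W ∩ nbr G (pathSet (φ i) (m i))).Nonempty
  rungPeq : ∀ i < k,
    pathSet p n ∩ nbr G (pathSet (φ i) (m i)) = pathSet p n ∩ nbr G {φ i (m i - 1)}
  rungPne : ∀ i < k, (pathSet p n ∩ nbr G (pathSet (φ i) (m i))).Nonempty

/-- `G` is (exactly) a `k`-cycle rope ladder. -/
def IsCycleRopeLadderGraph {V : Type} (G : SimpleGraph V) (k : ℕ) : Prop :=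
  ∃ (c : ℕ → V) (nc : ℕ) (p : ℕ → V) (n : ℕ) (m : ℕ → ℕ) (φ : ℕ → ℕ → V),
    IsIndCycleOn G c nc ∧ IsHRopeConfig G k (pathSet c nc) p n m φ ∧
    ∀ v : V, v ∈ pathSet c nc ∪ pathSet p n ∪ ⋃ i ∈ Set.Iio k, pathSet (φ i) (m i)

/-- A strong bramble: a nonempty family of connected, pairwise intersecting vertex sets. -/
def IsStrongBramble {V : Type} (G : SimpleGraph V) (B : Set (Set V)) : Prop :=
  B.Nonempty ∧ (∀ X ∈ B, (G.induce X).Connected) ∧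
    ∀ X ∈ B, ∀ Y ∈ B, (X ∩ Y).Nonempty

/-- The α-order of a bramble: the minimum independence number of a hitting set. -/
noncomputable def brambleOrder {V : Type} [Fintype V] (G : SimpleGraph V)
    (B : Set (Set V)) : ℕ :=
  sInf {a : ℕ | ∃ X : Set V, (∀ Y ∈ B, (X ∩ Y).Nonempty) ∧ alphaSet G X = a}

/-- Every connected component of `S` is a tripod (a tree with at most three leaves). -/
def ComponentsAreTripods {U : Type} [Fintype U] (S : SimpleGraph U) : Prop :=
  S.IsAcyclic ∧ ∀ c : S.ConnectedComponent,
    Set.ncard {v | v ∈ c.supp ∧ Set.ncard {u | S.Adj v u} = 1} ≤ 3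

/-- `ρ(k,d) = (2(d−1)²(2d−1)^{2d−2})^{k−1}`. -/
def rhoFn (k d : ℕ) : ℕ := (2 * (d - 1) ^ 2 * (2 * d - 1) ^ (2 * d - 2)) ^ (k - 1)

/-- `ν(k,d) = ρ(ρ((k−1)²+1, d), d)`. -/
def nuFn (k d : ℕ) : ℕ := rhoFn (rhoFn ((k - 1) ^ 2 + 1) d) d

/-!
Encode the neighbourhood of `a ∈ A` on the path by its set `N a ⊆ [0, n)` of indices. As `G` is
`K_{1,d}`-free and `A` is independent, every index lies in at most `q = d - 1` of the sets `N a`,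
and every `N a` has at most `p = 2d - 2` elements, because path vertices whose indices have equal
parity are pairwise non-adjacent. For such a family, `((p + 1)(q + 1))^(k-1) ≤ ρ(k, d)` members
already contain `k` whose sets appear in order on a prefix of the window `[lo, hi)`. Take the
member `a₁` whose last index `x` in the window comes first. Either many members avoid `[lo, x]`,
and `a₁` followed by `k - 1` of them chosen in `[x + 1, hi)` works; or, apart from the at most `q`
members containing `x`, many members meet `[lo, x)` and also have an index beyond `x`, so they
have fewer indices in the window `[lo, x)` and induction on `p` applies.
-/

open Finset

def InOrderOn (S : ℕ → Finset ℕ) (k lo hi : ℕ) : Prop :=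
  ∃ x : ℕ → ℕ, x 0 = lo ∧ x k = hi ∧ (∀ i < k, x i < x (i + 1)) ∧
    ∀ i < k, (S i ∩ Ico lo hi).Nonempty ∧ S i ∩ Ico lo hi ⊆ Ico (x i) (x (i + 1))

namespace InOrderOn

variable {S : ℕ → Finset ℕ} {k lo c hi : ℕ}

lemma zero (S : ℕ → Finset ℕ) (c : ℕ) : InOrderOn S 0 c c :=
  ⟨fun _ => c, rfl, rfl, by simp, by simp⟩

lemma le (h : InOrderOn S k lo hi) : lo ≤ hi := by
  obtain ⟨x, hx0, hxk, -, hblock⟩ := h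
  cases k with
  | zero => exact (hx0.symm.trans hxk).le
  | succ k =>
    obtain ⟨j, hj⟩ := (hblock 0 k.succ_pos).1
    exact (mem_Ico.1 (mem_inter.1 hj).2).1.trans (mem_Ico.1 (mem_inter.1 hj).2).2.le

lemma cons {T : Finset ℕ} (h : InOrderOn S k c hi) (hlo : lo < c)
    (hT : (T ∩ Ico lo hi).Nonempty) (hTc : T ∩ Ico lo hi ⊆ Ico lo c)
    (hS : ∀ i < k, S i ∩ Ico lo c = ∅) :
    InOrderOn (Stream'.cons T S) (k + 1) lo hi := by
  have hc := h.le
  obtain ⟨x, hx0, hxk, hmono, hblock⟩ := h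
  have hwindow : ∀ i < k, S i ∩ Ico lo hi = S i ∩ Ico c hi := by
    intro i hi'
    ext j
    have hj : j ∈ S i → lo ≤ j → c ≤ j := fun hjS hlj => by
      by_contra hjc
      have : j ∈ S i ∩ Ico lo c := mem_inter.2 ⟨hjS, mem_Ico.2 ⟨hlj, by omega⟩⟩
      simp [hS i hi'] at this
    simp only [mem_inter, mem_Ico]
    constructor
    · rintro ⟨hjS, hlj, hjh⟩; exact ⟨hjS, hj hjS hlj, hjh⟩
    · rintro ⟨hjS, hcj, hjh⟩; exact ⟨hjS, by omega, hjh⟩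
  refine ⟨Stream'.cons lo x, rfl, hxk, ?_, ?_⟩
  · rintro (_ | i) hi'
    · show lo < x 0
      omega
    · exact hmono i (by omega)
  · rintro (_ | i) hi'
    · exact ⟨hT, by rwa [← hx0] at hTc⟩
    · show (S i ∩ Ico lo hi).Nonempty ∧ S i ∩ Ico lo hi ⊆ Ico (x i) (x (i + 1))
      rw [hwindow i (by omega)]
      exact hblock i (by omega)

end InOrderOn

section Choice

variable {α : Type*} (N : α → Finset ℕ)

def HasOrderedChoice (A : Finset α) (k lo hi : ℕ) : Prop :=
  ∃ b : ℕ → α, (∀ i < k, b i ∈ A) ∧ Set.InjOn b (Set.Iio k) ∧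
    ∃ m ≤ hi, InOrderOn (N ∘ b) k lo m

structure IsSparseOn (q p : ℕ) (A : Finset α) (lo hi : ℕ) : Prop where
  card_filter_mem_le : ∀ i, #{a ∈ A | i ∈ N a} ≤ q
  nonempty : ∀ a ∈ A, (N a ∩ Ico lo hi).Nonempty
  card_le : ∀ a ∈ A, #(N a ∩ Ico lo hi) ≤ p

variable {N}

namespace HasOrderedChoice

variable {A C : Finset α} {k lo c hi : ℕ}

lemma mono {A' : Finset α} {hi' : ℕ} (h : HasOrderedChoice N A k lo hi) (hA : A ⊆ A')
    (hhi : hi ≤ hi') : HasOrderedChoice N A' k lo hi' := by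
  obtain ⟨b, hbA, hinj, m, hm, hord⟩ := h
  exact ⟨b, fun i hi => hA (hbA i hi), hinj, m, hm.trans hhi, hord⟩

lemma cons {a : α} (h : HasOrderedChoice N C k c hi) (ha : a ∈ A) (hCA : C ⊆ A)
    (haC : a ∉ C) (hlo : lo < c) (hne : (N a ∩ Ico lo c).Nonempty)
    (hle : N a ∩ Ico lo hi ⊆ Ico lo c) (hC : ∀ a' ∈ C, N a' ∩ Ico lo c = ∅) :
    HasOrderedChoice N A (k + 1) lo hi := by
  obtain ⟨b, hbC, hinj, m, hm, hord⟩ := h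
  refine ⟨Stream'.cons a b, ?_, ?_, m, hm, ?_⟩
  · rintro (_ | i) hi'
    exacts [ha, hCA (hbC i (by omega))]
  · rintro (_ | i) hi' (_ | j) hj' hij
    · rfl
    · change a = b j at hij
      exact absurd (hij ▸ hbC j (by simp at hj'; omega)) haC
    · change b i = a at hij
      exact absurd (hij ▸ hbC i (by simp at hi'; omega)) haC
    · simp only [Set.mem_Iio] at hi' hj'
      exact congrArg _ (hinj (by simp; omega) (by simp; omega) hij)
  · have hcm := hord.le
    have hcomp : N ∘ Stream'.cons a b = Stream'.cons (N a) (N ∘ b) := by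
      funext i
      cases i <;> rfl
    rw [hcomp]
    refine hord.cons hlo (hne.mono ?_) ((inter_subset_inter_left ?_).trans hle)
      (fun i hi' => hC _ (hbC i hi'))
    · exact inter_subset_inter_left (Ico_subset_Ico_right hcm)
    · exact Ico_subset_Ico_right hm

lemma one {a : α} (ha : a ∈ A) (hne : (N a ∩ Ico lo hi).Nonempty) :
    HasOrderedChoice N A 1 lo hi := by
  obtain ⟨j, hj⟩ := hne
  have hj' := mem_Ico.1 (mem_inter.1 hj).2
  have hnil : HasOrderedChoice N (∅ : Finset α) 0 hi hi :=
    ⟨fun _ => a, by simp, by simp, hi, le_rfl, InOrderOn.zero _ hi⟩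
  exact hnil.cons ha (empty_subset _) (notMem_empty _) (by omega) ⟨j, hj⟩ inter_subset_right
    (by simp)

end HasOrderedChoice

namespace IsSparseOn

variable {q p : ℕ} {A : Finset α} {lo hi x : ℕ}

lemma card_filter_mem_le_of_subset (h : IsSparseOn N q p A lo hi) {A' : Finset α}
    (hA' : A' ⊆ A) (i : ℕ) : #{a ∈ A' | i ∈ N a} ≤ q :=
  (card_le_card (filter_subset_filter _ hA')).trans (h.card_filter_mem_le i)

lemma after (h : IsSparseOn N q p A lo hi) (hlo : lo ≤ x)
    (hx : ∀ a ∈ A, ∃ j ∈ N a ∩ Ico lo hi, x ≤ j) :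
    IsSparseOn N q p {a ∈ A | N a ∩ Ico lo (x + 1) = ∅} (x + 1) hi where
  card_filter_mem_le := h.card_filter_mem_le_of_subset (filter_subset _ _)
  nonempty a ha := by
    obtain ⟨haA, hfar⟩ := mem_filter.1 ha
    obtain ⟨j, hj, hxj⟩ := hx a haA
    rw [mem_inter, mem_Ico] at hj
    refine ⟨j, mem_inter.2 ⟨hj.1, mem_Ico.2 ⟨?_, hj.2.2⟩⟩⟩
    by_contra hjx
    have : j ∈ N a ∩ Ico lo (x + 1) := mem_inter.2 ⟨hj.1, mem_Ico.2 ⟨hj.2.1, by omega⟩⟩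
    simp [hfar] at this
  card_le a ha :=
    (card_le_card (inter_subset_inter_left (Ico_subset_Ico_left (by omega)))).trans
      (h.card_le a (filter_subset _ _ ha))

lemma before (h : IsSparseOn N q (p + 1) A lo hi)
    (hx : ∀ a ∈ A, ∃ j ∈ N a ∩ Ico lo hi, x ≤ j) (hxhi : x ≤ hi) :
    IsSparseOn N q p {a ∈ A | (N a ∩ Ico lo (x + 1)).Nonempty ∧ x ∉ N a} lo x where
  card_filter_mem_le := h.card_filter_mem_le_of_subset (filter_subset _ _)
  nonempty a ha := by
    obtain ⟨-, ⟨j, hj⟩, hxa⟩ := mem_filter.1 ha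
    rw [mem_inter, mem_Ico] at hj
    have hjx : j ≠ x := fun h => hxa (h ▸ hj.1)
    exact ⟨j, mem_inter.2 ⟨hj.1, mem_Ico.2 ⟨hj.2.1, by omega⟩⟩⟩
  card_le a ha := by
    have haA := filter_subset _ _ ha
    obtain ⟨j, hj, hxj⟩ := hx a haA
    have hsub : N a ∩ Ico lo x ⊂ N a ∩ Ico lo hi := by
      refine (ssubset_iff_of_subset (inter_subset_inter_left (Ico_subset_Ico_right hxhi))).2
        ⟨j, hj, fun hj' => ?_⟩
      have := (mem_Ico.1 (mem_inter.1 hj').2).2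
      omega
    exact Nat.le_of_lt_succ ((card_lt_card hsub).trans_le (h.card_le a haA))

lemma card_le_card_after_add_card_before (h : IsSparseOn N q p A lo hi) (x : ℕ) :
    #A ≤ #{a ∈ A | N a ∩ Ico lo (x + 1) = ∅} +
      #{a ∈ A | (N a ∩ Ico lo (x + 1)).Nonempty ∧ x ∉ N a} + q := by
  classical
  have hcover : A ⊆ {a ∈ A | N a ∩ Ico lo (x + 1) = ∅} ∪
      {a ∈ A | (N a ∩ Ico lo (x + 1)).Nonempty ∧ x ∉ N a} ∪ {a ∈ A | x ∈ N a} := by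
    intro a ha
    simp only [mem_union, mem_filter, ← not_nonempty_iff_eq_empty]
    tauto
  calc #A ≤ _ := card_le_card hcover
    _ ≤ _ := card_union_le _ _
    _ ≤ _ := add_le_add (card_union_le _ _) (h.card_filter_mem_le x)

end IsSparseOn

end Choice

lemma Finset.exists_isGreatest_forall_exists_ge {α β : Type*} [LinearOrder β] [OrderBot β]
    {A : Finset α} (T : α → Finset β) (hA : A.Nonempty) (hT : ∀ a ∈ A, (T a).Nonempty) :
    ∃ a₁ ∈ A, ∃ x, IsGreatest ↑(T a₁) x ∧ ∀ a ∈ A, ∃ j ∈ T a, x ≤ j := by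
  obtain ⟨a₁, ha₁, hmin⟩ := A.exists_min_image (fun a => (T a).sup id) hA
  obtain ⟨x, hx, hxsup⟩ := exists_mem_eq_sup (T a₁) (hT a₁ ha₁) id
  refine ⟨a₁, ha₁, x, ⟨hx, fun j hj => (le_sup (f := id) hj).trans hxsup.le⟩,
    fun a ha => ?_⟩
  obtain ⟨j, hj, hjsup⟩ := exists_mem_eq_sup (T a) (hT a ha) id
  exact ⟨j, hj, hxsup.symm.le.trans ((hmin a ha).trans hjsup.le)⟩

lemma pow_add_pow_add_le_pow_succ (p q k : ℕ) :
    ((p + 1) * (q + 1)) ^ k + (p * (q + 1)) ^ (k + 1) + q ≤ ((p + 1) * (q + 1)) ^ (k + 1) := by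
  have hY : (p * (q + 1)) ^ (k + 1) ≤ p * (q + 1) * ((p + 1) * (q + 1)) ^ k := by
    rw [pow_succ']
    exact Nat.mul_le_mul_left _ (Nat.pow_le_pow_left (by nlinarith) k)
  have hX : 1 ≤ ((p + 1) * (q + 1)) ^ k := Nat.one_le_pow _ _ (by positivity)
  have hsplit : ((p + 1) * (q + 1)) ^ (k + 1) =
      p * (q + 1) * ((p + 1) * (q + 1)) ^ k + (q + 1) * ((p + 1) * (q + 1)) ^ k := by
    ring
  rw [hsplit]
  nlinarith

theorem IsSparseOn.hasOrderedChoice {α : Type*} {N : α → Finset ℕ} {q p : ℕ} :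
    ∀ {k lo hi : ℕ} {A : Finset α}, IsSparseOn N q p A lo hi →
      ((p + 1) * (q + 1)) ^ k ≤ #A → HasOrderedChoice N A (k + 1) lo hi := by
  induction p with
  | zero =>
    intro k lo hi A hA hcard
    obtain ⟨a, ha⟩ := card_pos.1 (lt_of_lt_of_le (by positivity) hcard)
    have := (hA.nonempty a ha).card_pos
    have := hA.card_le a ha
    omega
  | succ p ihp =>
    intro k
    induction k with
    | zero =>
      intro lo hi A hA hcard
      obtain ⟨a, ha⟩ := card_pos.1 (by simpa using hcard)
      exact HasOrderedChoice.one ha (hA.nonempty a ha)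
    | succ k ihk =>
      intro lo hi A hA hcard
      have hAne : A.Nonempty := card_pos.1 (lt_of_lt_of_le (by positivity) hcard)
      obtain ⟨a₁, ha₁, x, ⟨hx, hx_max⟩, hx_min⟩ :=
        exists_isGreatest_forall_exists_ge (fun a => N a ∩ Ico lo hi) hAne hA.nonempty
      have hx' := mem_Ico.1 (mem_inter.1 hx).2
      have hx₁ : x ∈ N a₁ ∩ Ico lo (x + 1) :=
        mem_inter.2 ⟨(mem_inter.1 hx).1, by simp [hx'.1]⟩
      have hsplit := hA.card_le_card_after_add_card_before x
      by_cases hafter : ((p + 1 + 1) * (q + 1)) ^ k ≤ #{a ∈ A | N a ∩ Ico lo (x + 1) = ∅}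
      · refine (ihk (hA.after hx'.1 hx_min) hafter).cons ha₁ (filter_subset _ _)
          (fun h => by simp [(mem_filter.1 h).2] at hx₁) (by omega) ⟨x, hx₁⟩
          (fun j hj => ?_) (fun a ha => (mem_filter.1 ha).2)
        have := mem_Ico.1 (mem_inter.1 hj).2
        exact mem_Ico.2 ⟨this.1, Nat.lt_succ_of_le (hx_max hj)⟩
      · have := pow_add_pow_add_le_pow_succ (p + 1) q k
        exact (ihp (hA.before hx_min hx'.2.le) (by omega)).mono (filter_subset _ _) hx'.2.le

lemma pow_le_rhoFn {d : ℕ} (hd : 2 ≤ d) (k : ℕ) :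
    ((2 * (d - 1) + 1) * (d - 1 + 1)) ^ k ≤ rhoFn (k + 1) d := by
  obtain ⟨e, rfl⟩ : ∃ e, d = e + 2 := ⟨d - 2, by omega⟩
  unfold rhoFn
  refine Nat.pow_le_pow_left ?_ k
  have hsq : (2 * e + 3) ^ 2 ≤ (2 * e + 3) ^ (2 * (e + 2) - 2) :=
    Nat.pow_le_pow_right (by omega) (by omega)
  have h1 : 1 ≤ 2 * (e + 2 - 1) ^ 2 := by
    have : 1 ≤ (e + 2 - 1) ^ 2 := Nat.one_le_pow _ _ (by omega)
    omega
  have h2 : 2 * (e + 2) - 1 = 2 * e + 3 := by omega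
  rw [h2]
  calc (2 * (e + 2 - 1) + 1) * (e + 2 - 1 + 1) ≤ (2 * e + 3) ^ 2 := by
        rw [sq]; exact Nat.mul_le_mul (by omega) (by omega)
    _ ≤ (2 * e + 3) ^ (2 * (e + 2) - 2) := hsq
    _ ≤ 2 * (e + 2 - 1) ^ 2 * (2 * e + 3) ^ (2 * (e + 2) - 2) := Nat.le_mul_of_pos_left _ h1

section Graph

variable {V : Type} {G : SimpleGraph V} {d : ℕ}

lemma IsIndep.mono {S T : Set V} (h : IsIndep G T) (hST : S ⊆ T) : IsIndep G S :=
  fun u hu v hv => h u (hST hu) v (hST hv)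

lemma K1dFree.card_lt (hfree : K1dFree d G) {v : V} {s : Finset V}
    (hadj : ∀ a ∈ s, G.Adj v a) (hs : IsIndep G ↑s) : #s < d := by
  by_contra! hds
  obtain ⟨t, hts, htd⟩ := exists_subset_card_eq hds
  let e : Fin d ≃ t := (t.equivFinOfCardEq htd).symm
  have hadj' : ∀ i, G.Adj v (e i) := fun i => hadj _ (hts (e i).2)
  refine hfree.false ⟨⟨Sum.elim (fun _ => v) (fun i => (e i : V)), ?_⟩, ?_⟩
  · rintro (i | i) (j | j) h
    · exact congrArg _ (Subsingleton.elim i j)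
    · exact absurd h (hadj' j).ne
    · exact absurd h.symm (hadj' i).ne
    · exact congrArg _ (e.injective (Subtype.ext h))
  · rintro (i | i) (j | j)
    · show G.Adj v v ↔ _
      simp [completeBipartiteGraph]
    · show G.Adj v (e j) ↔ _
      simpa [completeBipartiteGraph] using hadj' j
    · show G.Adj (e i) v ↔ _
      simpa [completeBipartiteGraph] using (hadj' i).symm
    · show G.Adj (e i) (e j) ↔ _
      suffices ¬ G.Adj (e i) (e j) by simpa [completeBipartiteGraph]
      by_cases hij : i = j
      · simp [hij]
      · exact hs _ (hts (e i).2) _ (hts (e j).2) (fun h => hij (e.injective (Subtype.ext h)))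

variable [DecidableRel G.Adj]

lemma K1dFree.card_filter_adj_lt (hfree : K1dFree d G) {A : Finset V} (hA : IsIndep G ↑A)
    (v : V) : #{a ∈ A | G.Adj a v} < d :=
  hfree.card_lt (fun a ha => (mem_filter.1 ha).2.symm)
    (hA.mono (by simp only [coe_filter]; exact fun a ha => ha.1))

variable {f : ℕ → V} {n : ℕ}

lemma IsIndPathOn.card_filter_adj_lt_of_mod_two_eq (hfree : K1dFree d G) (hP : IsIndPathOn G f n)
    (a : V) {s : Finset ℕ} (hs : s ⊆ {j ∈ range n | G.Adj a (f j)})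
    (hpar : ∀ i ∈ s, ∀ j ∈ s, i % 2 = j % 2) : #s < d := by
  classical
  have hmem : ∀ j ∈ s, j < n ∧ G.Adj a (f j) := fun j hj => by
    simpa using hs hj
  rw [← card_image_of_injOn (fun i hi j hj h => hP.1 i j (hmem i hi).1 (hmem j hj).1 h)]
  refine hfree.card_lt (by simpa using fun j hj => (hmem j hj).2) ?_
  simp only [coe_image]
  rintro _ ⟨i, hi, rfl⟩ _ ⟨j, hj, rfl⟩ - hadj
  have := (hP.2 i j (hmem i hi).1 (hmem j hj).1).1 hadj
  have := hpar i hi j hj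
  omega

lemma IsIndPathOn.card_filter_adj_le (hfree : K1dFree d G) (hP : IsIndPathOn G f n) (a : V) :
    #{j ∈ range n | G.Adj a (f j)} ≤ 2 * (d - 1) := by
  set P := {j ∈ range n | G.Adj a (f j)}
  have hsplit : #{j ∈ P | j % 2 = 0} + #{j ∈ P | ¬ j % 2 = 0} = #P :=
    card_filter_add_card_filter_not _
  have heven := hP.card_filter_adj_lt_of_mod_two_eq hfree a (s := {j ∈ P | j % 2 = 0})
    (filter_subset _ _) (fun i hi j hj => by rw [(mem_filter.1 hi).2, (mem_filter.1 hj).2])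
  have hodd := hP.card_filter_adj_lt_of_mod_two_eq hfree a (s := {j ∈ P | ¬ j % 2 = 0})
    (filter_subset _ _)
    (fun i hi j hj => by have := (mem_filter.1 hi).2; have := (mem_filter.1 hj).2; omega)
  omega

lemma IsIndPathOn.isSparseOn (hfree : K1dFree d G) (hP : IsIndPathOn G f n) {A : Finset V}
    (hA : IsIndep G ↑A) (hnbr : ∀ a ∈ A, ∃ j < n, G.Adj a (f j)) :
    IsSparseOn (fun a => {j ∈ range n | G.Adj a (f j)}) (d - 1) (2 * (d - 1)) A 0 n where
  card_filter_mem_le i := by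
    have hsub : {a ∈ A | i ∈ {j ∈ range n | G.Adj a (f j)}} ⊆ {a ∈ A | G.Adj a (f i)} :=
      fun a ha => by
        simp only [mem_filter] at ha ⊢
        exact ⟨ha.1, ha.2.2⟩
    have := hfree.card_filter_adj_lt hA (f i)
    have := card_le_card hsub
    omega
  nonempty a ha := by
    obtain ⟨j, hj, hadj⟩ := hnbr a ha
    exact ⟨j, by simp [hj, hadj]⟩
  card_le a _ := (card_le_card inter_subset_left).trans (hP.card_filter_adj_le hfree a)

lemma InOrderOn.appearInOrderAlong {b : ℕ → V} {k m : ℕ}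
    (h : InOrderOn (fun i => {j ∈ range n | G.Adj (b i) (f j)}) k 0 m) (hm : m ≤ n) :
    AppearInOrderAlong f m k (fun i => {u | u ∈ pathSet f m ∧ G.Adj (b i) u}) := by
  obtain ⟨x, hx0, hxk, hmono, hblock⟩ := h
  refine ⟨fun i hi => ?_, x, hx0, hxk, hmono, fun i hi u hu => ?_⟩
  · obtain ⟨j, hj⟩ := (hblock i hi).1
    simp only [mem_inter, mem_filter, mem_range, mem_Ico] at hj
    exact ⟨f j, ⟨j, hj.2.2, rfl⟩, hj.1.2⟩
  · obtain ⟨⟨j, hj, rfl⟩, hadj⟩ := hu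
    have hjm : j < m := hj
    have := (hblock i hi).2 (by simp [hadj, hjm, hjm.trans_le hm] : j ∈ _)
    exact ⟨j, by simpa using this, rfl⟩

end Graph

theorem clean_one_side_general (k d : ℕ) (hk : 1 ≤ k) (hd : 2 ≤ d)
    (V : Type) (G : SimpleGraph V) (hfree : K1dFree d G)
    (f : ℕ → V) (n : ℕ) (hP : IsIndPathOn G f n)
    (A : Set V) (hA : A = nbr G (pathSet f n))
    (hindep : IsIndep G A)
    (hcard : rhoFn k d ≤ A.ncard) :
    ∃ b : ℕ → V, (∀ i < k, b i ∈ A) ∧ (∀ i < k, ∀ j < k, b i = b j → i = j) ∧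
      ∃ s m : ℕ, s + m ≤ n ∧
        AppearInOrderAlong (fun a => f (s + a)) m k
          (fun i => {u | u ∈ pathSet (fun a => f (s + a)) m ∧ G.Adj (b i) u}) := by
  classical
  obtain ⟨k, rfl⟩ := Nat.exists_eq_add_of_le' hk
  have hbound := pow_le_rhoFn hd k
  have hfin : A.Finite :=
    Set.finite_of_ncard_pos (lt_of_lt_of_le (by positivity) (hbound.trans hcard))
  have hnbr : ∀ a ∈ hfin.toFinset, ∃ j < n, G.Adj a (f j) := by
    intro a ha
    rw [Set.Finite.mem_toFinset, hA] at ha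
    obtain ⟨-, _, ⟨j, hj, rfl⟩, hadj⟩ := ha
    exact ⟨j, hj, hadj⟩
  obtain ⟨b, hbA, hinj, m, hmn, hord⟩ :=
    (hP.isSparseOn hfree (hindep.mono (by simp)) hnbr).hasOrderedChoice
      (by rw [← Set.ncard_eq_toFinset_card A hfin]; exact hbound.trans hcard)
  refine ⟨b, fun i hi => by simpa using hbA i hi, fun i hi j hj h => hinj hi hj h, 0, m,
    by omega, ?_⟩
  simpa only [zero_add] using InOrderOn.appearInOrderAlong (G := G) (b := b) hord hmn

/-- cleaning one side. -/
theorem clean_one_side (k d : ℕ) (hk : 1 ≤ k) (hd : 2 ≤ d)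
    (V : Type) [Fintype V] (G : SimpleGraph V) (hfree : K1dFree d G)
    (f : ℕ → V) (n : ℕ) (hn : 0 < n) (hP : IsIndPathOn G f n)
    (A : Set V) (hA : A = nbr G (pathSet f n))
    (hcover : ∀ v : V, v ∈ pathSet f n ∪ A)
    (hindep : IsIndep G A)
    (hcard : rhoFn k d ≤ A.ncard) :
    ∃ b : ℕ → V, (∀ i < k, b i ∈ A) ∧ (∀ i < k, ∀ j < k, b i = b j → i = j) ∧
      ∃ s m : ℕ, s + m ≤ n ∧
        AppearInOrderAlong (fun a => f (s + a)) m k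
          (fun i => {u | u ∈ pathSet (fun a => f (s + a)) m ∧ G.Adj (b i) u}) :=
  clean_one_side_general k d hk hd V G hfree f n hP A hA hindep hcard
end

section
/- Let k and d ≥ 2 be positive integers, set ρ(k,d) = (2(d−1)²(2d−1)^{2d−2})^{k−1} and ν(k,d) = ρ(ρ((k−1)²+1, d), d). If a ν(k,d)-shuffled rope ladder is K_{1,d}-free, then it contains a k-rope ladder as an induced subgraph. -/
open SimpleGraph

open Classical

section Helpers
variable {V : Type} {G : SimpleGraph V}

lemma mem_clNbr {X : Set V} {v : V} : v ∈ clNbr G X ↔ v ∈ X ∨ ∃ x ∈ X, G.Adj v x := by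
  constructor
  · rintro (h | ⟨-, h⟩)
    exacts [Or.inl h, Or.inr h]
  · rintro (h | h)
    · exact Or.inl h
    · by_cases hx : v ∈ X
      · exact Or.inl hx
      · exact Or.inr ⟨hx, h⟩

lemma setsAdj_mono {X X' Y Y' : Set V} (hX : X ⊆ X') (hY : Y ⊆ Y')
    (h : SetsAdj G X Y) : SetsAdj G X' Y' := by
  obtain ⟨v, hv1, hv2⟩ := h
  refine ⟨v, ?_, hY hv2⟩
  rcases mem_clNbr.mp hv1 with h' | ⟨x, hx, ha⟩
  · exact mem_clNbr.mpr (Or.inl (hX h'))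
  · exact mem_clNbr.mpr (Or.inr ⟨x, hX hx, ha⟩)

lemma no_star {d : ℕ} (hfree : K1dFree d G) (c : V) (w : Fin d → V)
    (hinj : Function.Injective w) (hadj : ∀ t, G.Adj c (w t))
    (hnon : ∀ t t', t ≠ t' → ¬ G.Adj (w t) (w t')) : False := by
  refine hfree.elim ⟨⟨Sum.elim (fun _ => c) w, ?_⟩, ?_⟩
  · rintro (a | a) (b | b) h <;> simp only [Sum.elim_inl, Sum.elim_inr] at h
    · exact congrArg Sum.inl (Subsingleton.elim a b)
    · exact absurd h (G.ne_of_adj (hadj b))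
    · exact absurd h.symm (G.ne_of_adj (hadj a))
    · exact congrArg Sum.inr (hinj h)
  · rintro (a | a) (b | b)
    · exact iff_of_false (G.irrefl) (by simp [completeBipartiteGraph])
    · exact iff_of_true (hadj b) (by simp [completeBipartiteGraph])
    · exact iff_of_true (hadj a).symm (by simp [completeBipartiteGraph])
    · refine iff_of_false ?_ (by simp [completeBipartiteGraph])
      intro h
      by_cases hab : a = b
      · subst hab; exact G.irrefl h
      · exact hnon a b hab h

lemma indPath_trim {p : ℕ → V} {n n' : ℕ} (h : IsIndPathOn G p n) (hle : n' ≤ n) :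
    IsIndPathOn G p n' :=
  ⟨fun a b ha hb => h.1 a b (lt_of_lt_of_le ha hle) (lt_of_lt_of_le hb hle),
   fun a b ha hb => h.2 a b (lt_of_lt_of_le ha hle) (lt_of_lt_of_le hb hle)⟩

lemma indPath_reverse {p : ℕ → V} {n : ℕ} (h : IsIndPathOn G p n) :
    IsIndPathOn G (fun a => p (n - 1 - a)) n := by
  constructor
  · intro a b ha hb heq
    have := h.1 _ _ (by omega : n - 1 - a < n) (by omega : n - 1 - b < n) heq
    omega
  · intro a b ha hb
    rw [h.2 _ _ (by omega : n - 1 - a < n) (by omega : n - 1 - b < n)]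
    omega

lemma pathSet_reverse {p : ℕ → V} {n : ℕ} :
    pathSet (fun a => p (n - 1 - a)) n = pathSet p n := by
  ext v
  constructor
  · rintro ⟨a, ha, rfl⟩
    exact ⟨n - 1 - a, by simp at ha ⊢; omega, rfl⟩
  · rintro ⟨a, ha, rfl⟩
    simp only [Set.mem_setOf_eq] at ha
    exact ⟨n - 1 - a, by simp; omega, by simp; congr 1; omega⟩

lemma pathSet_mono {p : ℕ → V} {n n' : ℕ} (h : n' ≤ n) : pathSet p n' ⊆ pathSet p n := by
  rintro v ⟨a, ha, rfl⟩
  exact ⟨a, lt_of_lt_of_le ha h, rfl⟩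

lemma buildAppear {q : ℕ → V} {n k : ℕ} {S : ℕ → Finset ℕ} {A : ℕ → Set V}
    (hk : 1 ≤ k)
    (hA : ∀ t < k, A t = q '' {a | a ∈ S t})
    (hne : ∀ t < k, (S t).Nonempty)
    (hsub : ∀ t < k, ∀ a ∈ S t, a < n)
    (hsep : ∀ t t', t < t' → t' < k → ∀ a ∈ S t, ∀ b ∈ S t', a < b) :
    AppearInOrderAlong q n k A := by
  constructor
  · intro t ht
    obtain ⟨a, ha⟩ := hne t ht
    exact ⟨q a, (hA t ht) ▸ ⟨a, ha, rfl⟩⟩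
  · refine ⟨fun t => if t = 0 then 0 else if k ≤ t then n else (S (t-1)).sup id + 1,
      by simp, ?_, ?_, ?_⟩
    · dsimp only
      rw [if_neg (by omega : ¬ (k = 0)), if_pos le_rfl]
    · intro t ht
      dsimp only
      obtain ⟨b, hb⟩ := hne t ht
      have hbn := hsub t ht b hb
      have hbs := Finset.le_sup (f := id) hb
      simp only [id_eq] at hbs
      by_cases h0 : t = 0
      · subst h0
        rw [if_pos rfl]
        by_cases hk1 : k ≤ 1
        · rw [if_neg (by omega : ¬ (0+1 = 0)), if_pos (by omega : k ≤ 0+1)]; omega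
        · rw [if_neg (by omega : ¬ (0+1 = 0)), if_neg (by omega : ¬ k ≤ 0+1)]
          simp only [Nat.add_sub_cancel]
          omega
      · have hprev : (S (t-1)).sup id ∈ S (t-1) := by
          obtain ⟨c', hc', he⟩ := Finset.exists_mem_eq_sup (S (t-1)) (hne _ (by omega)) id
          rw [he]; exact hc'
        have hlt := hsep (t-1) t (by omega) ht _ hprev b hb
        rw [if_neg h0, if_neg (by omega : ¬ k ≤ t), if_neg (by omega : ¬ t+1 = 0)]
        by_cases hlast : k ≤ t + 1
        · rw [if_pos hlast]
          omega
        · rw [if_neg hlast]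
          simp only [Nat.add_sub_cancel]
          omega
    · intro t ht
      rw [hA t ht]
      rintro v ⟨a, ha, rfl⟩
      simp only [Set.mem_setOf_eq] at ha
      have han := hsub t ht a ha
      have hasup := Finset.le_sup (f := id) ha
      simp only [id_eq] at hasup
      refine ⟨a, ⟨?_, ?_⟩, rfl⟩
      · dsimp only
        by_cases h0 : t = 0
        · rw [if_pos h0]; omega
        · have hprev : (S (t-1)).sup id ∈ S (t-1) := by
            obtain ⟨c', hc', he⟩ := Finset.exists_mem_eq_sup (S (t-1)) (hne _ (by omega)) id
            rw [he]; exact hc'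
          have hlt := hsep (t-1) t (by omega) ht _ hprev a ha
          rw [if_neg h0, if_neg (by omega : ¬ k ≤ t)]
          omega
      · dsimp only
        rw [if_neg (by omega : ¬ t+1 = 0)]
        by_cases hlast : k ≤ t + 1
        · rw [if_pos hlast]; omega
        · rw [if_neg hlast]
          simp only [Nat.add_sub_cancel]
          omega

end Helpers
def fCnt (d : ℕ) : ℕ → ℕ → ℕ
  | 0, _ => 0
  | _+1, 0 => 1
  | m+1, r+1 => fCnt d m (r+1) + fCnt d (m+1) r + 2*(d-1)

lemma fCnt_zero (d r : ℕ) : fCnt d 0 r = 0 := by simp [fCnt]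
lemma fCnt_succ_zero (d m : ℕ) : fCnt d (m+1) 0 = 1 := by simp [fCnt]
lemma fCnt_succ_succ (d m r : ℕ) :
    fCnt d (m+1) (r+1) = fCnt d m (r+1) + fCnt d (m+1) r + 2*(d-1) := by simp [fCnt]

lemma sup_id_mem {s : Finset ℕ} (h : s.Nonempty) : s.sup id ∈ s := by
  obtain ⟨b, hb, he⟩ := Finset.exists_mem_eq_sup s h id
  rw [he]; exact hb

lemma core {d : ℕ} (hd : 2 ≤ d) :
    ∀ (m r : ℕ) (F : Finset ℕ) (A : ℕ → Finset ℕ),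
    (∀ i ∈ F, (A i).Nonempty) →
    (∀ i ∈ F, ∀ T ⊆ A i, (∀ a ∈ T, ∀ b ∈ T, a ≠ b → a + 2 ≤ b ∨ b + 2 ≤ a) → T.card ≤ r) →
    (∀ pos : ℕ, (F.filter (fun i => pos ∈ A i)).card ≤ d - 1) →
    fCnt d m r ≤ F.card →
    ∃ (hi : ℕ) (g : Fin m → ℕ), Function.Injective g ∧ (∀ j, g j ∈ F) ∧
      (∀ j, ((A (g j)).filter (· < hi)).Nonempty) ∧
      (∀ j j' : Fin m, j < j' → ∀ a ∈ (A (g j)).filter (· < hi),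
        ∀ b ∈ (A (g j')).filter (· < hi), a < b) := by
  intro m
  induction m with
  | zero =>
    intro r F A _ _ _ _
    exact ⟨0, Fin.elim0, fun j => j.elim0, fun j => j.elim0, fun j => j.elim0,
      fun j => j.elim0⟩
  | succ m ihm =>
    intro r
    induction r with
    | zero =>
      intro F A hne hsig _ hcard
      exfalso
      have h1 : (1 : ℕ) ≤ F.card := (fCnt_succ_zero d m) ▸ hcard
      obtain ⟨i₀, hi₀⟩ := Finset.card_pos.mp (show 0 < F.card by omega)
      obtain ⟨a, ha⟩ := hne i₀ hi₀
      have := hsig i₀ hi₀ {a} (by simpa using ha) (by simp)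
      simp at this
    | succ r ihr =>
      intro F A hne hsig hmult hcard
      have hFne : F.Nonempty := by
        apply Finset.card_pos.mp
        have := fCnt_succ_succ d m r
        omega
      obtain ⟨i₀, hi₀F, hmin⟩ := F.exists_min_image (fun i => (A i).sup id) hFne
      set M := (A i₀).sup id with hM
      have hMmem : M ∈ A i₀ := sup_id_mem (hne i₀ hi₀F)
      set Right := F.filter (fun i => ∀ a ∈ A i, M < a) with hRdef
      set Left := F.filter (fun i => ∃ a ∈ A i, a + 2 ≤ M) with hLdef
      have hcover : F ⊆ Right ∪ Left ∪
          (F.filter (fun i => M - 1 ∈ A i) ∪ F.filter (fun i => M ∈ A i)) := by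
        intro i hiF
        by_cases hr : ∀ a ∈ A i, M < a
        · exact Finset.mem_union_left _ (Finset.mem_union_left _
            (Finset.mem_filter.mpr ⟨hiF, hr⟩))
        · by_cases hl : ∃ a ∈ A i, a + 2 ≤ M
          · exact Finset.mem_union_left _ (Finset.mem_union_right _
              (Finset.mem_filter.mpr ⟨hiF, hl⟩))
          · push_neg at hr hl
            obtain ⟨a, haA, haM⟩ := hr
            have := hl a haA
            apply Finset.mem_union_right
            rcases (by omega : a = M - 1 ∨ a = M) with h | h
            · exact Finset.mem_union_left _ (Finset.mem_filter.mpr ⟨hiF, h ▸ haA⟩)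
            · exact Finset.mem_union_right _ (Finset.mem_filter.mpr ⟨hiF, h ▸ haA⟩)
      have hcardsum : F.card ≤ Right.card + Left.card + 2*(d-1) := by
        have h1 := Finset.card_le_card hcover
        have h2 := Finset.card_union_le (Right ∪ Left)
          (F.filter (fun i => M - 1 ∈ A i) ∪ F.filter (fun i => M ∈ A i))
        have h3 := Finset.card_union_le Right Left
        have h4 := Finset.card_union_le (F.filter (fun i => M - 1 ∈ A i))
          (F.filter (fun i => M ∈ A i))
        have h5 := hmult (M - 1)
        have h6 := hmult M
        omega
      by_cases hR : fCnt d m (r+1) ≤ Right.card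
      · -- right branch
        have hRsub : Right ⊆ F := Finset.filter_subset _ _
        obtain ⟨hi', g', hginj, hgF, htr, hsep⟩ :=
          ihm (r+1) Right A (fun i hi => hne i (hRsub hi))
            (fun i hi => hsig i (hRsub hi))
            (fun pos => le_trans (Finset.card_le_card (by
              intro i hi
              simp only [Finset.mem_filter] at hi ⊢
              exact ⟨hRsub hi.1, hi.2⟩)) (hmult pos)) hR
        have hi₀notR : i₀ ∉ Right := by
          simp only [hRdef, Finset.mem_filter]
          rintro ⟨-, h⟩
          exact lt_irrefl M (h M hMmem)
        rcases Nat.eq_zero_or_pos m with hm0 | hmpos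
        · subst hm0
          refine ⟨M + 1, fun _ => i₀,
            fun a b _ => Fin.ext (by have := a.isLt; have := b.isLt; omega),
            fun _ => hi₀F, fun _ => ⟨M, Finset.mem_filter.mpr ⟨hMmem, by simp⟩⟩, ?_⟩
          intro j j' hjj'
          exact absurd hjj' (by omega)
        · have hMhi' : M < hi' := by
            obtain ⟨a, ha⟩ := htr ⟨0, hmpos⟩
            simp only [Finset.mem_filter] at ha
            have := (Finset.mem_filter.mp (hgF ⟨0, hmpos⟩)).2 a ha.1
            omega
          refine ⟨hi', Fin.cons i₀ g', ?_, ?_, ?_, ?_⟩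
          · intro j j' h
            induction j using Fin.cases with
            | zero =>
              induction j' using Fin.cases with
              | zero => rfl
              | succ j' =>
                simp only [Fin.cons_zero, Fin.cons_succ] at h
                exact absurd (h ▸ hgF j') hi₀notR
            | succ j =>
              induction j' using Fin.cases with
              | zero =>
                simp only [Fin.cons_zero, Fin.cons_succ] at h
                exact absurd (h ▸ hgF j) hi₀notR
              | succ j' =>
                simp only [Fin.cons_succ] at h
                exact congrArg Fin.succ (hginj h)
          · intro j
            induction j using Fin.cases with
            | zero => exact hi₀F
            | succ j => exact hRsub (hgF j)
          · intro j
            induction j using Fin.cases with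
            | zero =>
              exact ⟨M, Finset.mem_filter.mpr ⟨hMmem, hMhi'⟩⟩
            | succ j => exact htr j
          · intro j j' hjj' a haf b hbf
            induction j' using Fin.cases with
            | zero => exact absurd hjj' (by simp [Fin.lt_iff_val_lt_val])
            | succ j' =>
              induction j using Fin.cases with
              | zero =>
                simp only [Fin.cons_zero] at haf
                simp only [Fin.cons_succ] at hbf
                have haM : a ≤ M := by
                  have := Finset.le_sup (f := id) (Finset.mem_filter.mp haf).1
                  simpa using this
                have hbM : M < b :=
                  (Finset.mem_filter.mp (hgF j')).2 b (Finset.mem_filter.mp hbf).1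
                omega
              | succ j =>
                simp only [Fin.cons_succ] at haf hbf
                exact hsep j j' (by
                  rw [Fin.lt_iff_val_lt_val] at hjj' ⊢
                  simpa using hjj') a haf b hbf
      · by_cases hL : fCnt d (m+1) r ≤ Left.card
        · -- left branch
          have hLsub : Left ⊆ F := Finset.filter_subset _ _
          obtain ⟨hi'', g, hginj, hgL, htr, hsep⟩ :=
            ihr Left (fun i => (A i).filter (fun a => a + 2 ≤ M))
              (fun i hi => by
                obtain ⟨a, ha, hale⟩ := (Finset.mem_filter.mp hi).2
                exact ⟨a, Finset.mem_filter.mpr ⟨ha, hale⟩⟩)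
              (fun i hi T hT hpw => by
                have hiF := hLsub hi
                set e := (A i).sup id with he
                have heA : e ∈ A i := sup_id_mem (hne i hiF)
                have hMe : M ≤ e := hmin i hiF
                have heT : e ∉ T := by
                  intro h
                  have := (Finset.mem_filter.mp (hT h)).2
                  omega
                have hsub' : insert e T ⊆ A i := by
                  intro x hx
                  rcases Finset.mem_insert.mp hx with rfl | hx
                  · exact heA
                  · exact (Finset.mem_filter.mp (hT hx)).1
                have hpw' : ∀ a ∈ insert e T, ∀ b ∈ insert e T,
                    a ≠ b → a + 2 ≤ b ∨ b + 2 ≤ a := by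
                  intro a ha b hb hab
                  rcases Finset.mem_insert.mp ha with rfl | ha <;>
                    rcases Finset.mem_insert.mp hb with rfl | hb
                  · exact absurd rfl hab
                  · right
                    have := (Finset.mem_filter.mp (hT hb)).2
                    omega
                  · left
                    have := (Finset.mem_filter.mp (hT ha)).2
                    omega
                  · exact hpw a ha b hb hab
                have := hsig i hiF (insert e T) hsub' hpw'
                rw [Finset.card_insert_of_notMem heT] at this
                omega)
              (fun pos => le_trans (Finset.card_le_card (by
                intro i hi
                simp only [Finset.mem_filter] at hi ⊢
                exact ⟨hLsub hi.1, hi.2.1⟩)) (hmult pos)) hL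
          have key : ∀ i, (A i).filter (· < min hi'' (M - 1)) =
              ((A i).filter (fun a => a + 2 ≤ M)).filter (· < hi'') := by
            intro i
            ext a
            simp only [Finset.mem_filter]
            constructor
            · rintro ⟨h1, h2⟩
              exact ⟨⟨h1, by omega⟩, by omega⟩
            · rintro ⟨⟨h1, h2⟩, h3⟩
              exact ⟨h1, by omega⟩
          refine ⟨min hi'' (M - 1), g, hginj, fun j => hLsub (hgL j), ?_, ?_⟩
          · intro j
            rw [key]
            exact htr j
          · intro j j' hjj' a ha b hb
            rw [key] at ha hb
            exact hsep j j' hjj' a ha b hb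
        · exfalso
          have := fCnt_succ_succ d m r
          omega
lemma gBound {d : ℕ} (hd : 2 ≤ d) :
    ∀ m r : ℕ, fCnt d m r + 2*(d-1) ≤ (2*d-1) * Nat.choose (m+r) r := by
  intro m
  induction m with
  | zero =>
    intro r
    rw [fCnt_zero]
    simp [Nat.choose_self]
    omega
  | succ m ihm =>
    intro r
    induction r with
    | zero =>
      rw [fCnt_succ_zero]
      simp
      omega
    | succ r ihr =>
      rw [fCnt_succ_succ]
      have h1 := ihm (r+1)
      have h2 := ihr
      have hp : (m+1+(r+1)).choose (r+1) = (m+(r+1)).choose (r+1) + (m+1+r).choose r := by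
        have := Nat.choose_succ_succ (m+r+1) r
        have e1 : m+1+(r+1) = m+r+1+1 := by omega
        have e2 : m+(r+1) = m+r+1 := by omega
        have e3 : m+1+r = m+r+1 := by omega
        rw [e1, e2, e3, this]
        simp only [Nat.succ_eq_add_one]
        omega
      rw [hp, Nat.mul_add]
      omega

lemma chooseBound {d : ℕ} (hd : 1 ≤ d) : ∀ m : ℕ, Nat.choose (d-1+m) m ≤ d^m := by
  intro m
  induction m with
  | zero => simp
  | succ m ihm =>
    have key : (d-1+m+1) * (d-1+m).choose m = (d-1+(m+1)).choose (m+1) * (m+1) := by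
      have h := Nat.add_one_mul_choose_eq (d-1+m) m
      have e : d-1+(m+1) = (d-1+m)+1 := by omega
      rw [e]
      simpa [Nat.succ_eq_add_one] using h
    have h1 : (d-1+(m+1)).choose (m+1) * (m+1) ≤ d^m * (d-1+m+1) := by
      rw [← key]
      calc (d-1+m+1) * (d-1+m).choose m ≤ (d-1+m+1) * d^m :=
            Nat.mul_le_mul_left _ ihm
        _ = d^m * (d-1+m+1) := by ring
    have h2 : d^m * (d-1+m+1) ≤ d^m * (d * (m+1)) := by
      apply Nat.mul_le_mul_left
      have e : d-1+m+1 = d+m := by omega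
      rw [e]
      have hdm : m ≤ d*m := Nat.le_mul_of_pos_left m (by omega)
      nlinarith
    have h3 : (d-1+(m+1)).choose (m+1) * (m+1) ≤ d^(m+1) * (m+1) := by
      calc (d-1+(m+1)).choose (m+1) * (m+1) ≤ d^m * (d * (m+1)) := le_trans h1 h2
        _ = d^(m+1) * (m+1) := by ring
    exact Nat.le_of_mul_le_mul_right h3 (by omega)

lemma powBound {d : ℕ} (hd : 2 ≤ d) :
    ∀ m : ℕ, 2 ≤ m → (2*d-1) * d^m ≤ (2*(d-1)^2*(2*d-1)^(2*d-2))^(m-1) := by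
  obtain ⟨c, rfl⟩ : ∃ c, d = c + 2 := ⟨d - 2, by omega⟩
  intro m
  induction m with
  | zero => exact fun h => absurd h (by omega)
  | succ m ihm =>
    intro hm
    rcases Nat.lt_or_ge m 2 with hm2 | hm2
    · -- m+1 = 2, i.e. m = 1
      have hm1 : m = 1 := by omega
      subst hm1
      have e1 : 2*(c+2)-1 = 2*c+3 := by omega
      have e2 : (c+2)-1 = c+1 := by omega
      have e3 : 2*(c+2)-2 = 2*c+2 := by omega
      rw [e1, e2, e3]
      norm_num
      have h5 : (2*c+3)^(2*c+2) ≥ (2*c+3)^2 :=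
        Nat.pow_le_pow_right (by omega) (by omega)
      have h6a : (c+2)^2 ≤ 2*(c+1)^2*(2*c+3) := by nlinarith
      have h6 : (2*c+3) * (c+2)^2 ≤ 2*(c+1)^2*(2*c+3)^2 := by
        have h6b := Nat.mul_le_mul_left (2*c+3) h6a
        nlinarith [h6b]
      calc (2*c+3) * (c+2)^2 ≤ 2*(c+1)^2*(2*c+3)^2 := h6
        _ ≤ 2*(c+1)^2*(2*c+3)^(2*c+2) := Nat.mul_le_mul_left _ h5
    · have ih := ihm hm2
      have e5 : m + 1 - 1 = (m - 1) + 1 := by omega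
      rw [e5, pow_succ _ (m-1)]
      have hdB : (c+2) ≤ 2*((c+2)-1)^2*(2*(c+2)-1)^(2*(c+2)-2) := by
        have e2 : (c+2)-1 = c+1 := by omega
        have e1 : 2*(c+2)-1 = 2*c+3 := by omega
        have e3 : 2*(c+2)-2 = 2*c+2 := by omega
        rw [e1, e2, e3]
        have : (2*c+3)^(2*c+2) ≥ 1 := Nat.one_le_pow _ _ (by omega)
        nlinarith
      calc (2*(c+2)-1) * (c+2)^(m+1) = ((2*(c+2)-1) * (c+2)^m) * (c+2) := by ring
        _ ≤ (2*((c+2)-1)^2*(2*(c+2)-1)^(2*(c+2)-2))^(m-1) * (c+2) :=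
            Nat.mul_le_mul_right _ ih
        _ ≤ (2*((c+2)-1)^2*(2*(c+2)-1)^(2*(c+2)-2))^(m-1) *
            (2*((c+2)-1)^2*(2*(c+2)-1)^(2*(c+2)-2)) := Nat.mul_le_mul_left _ hdB

lemma fBound {d m : ℕ} (hd : 2 ≤ d) (hm : 2 ≤ m) :
    fCnt d m (d-1) ≤ (2*(d-1)^2*(2*d-1)^(2*d-2))^(m-1) := by
  have h1 : fCnt d m (d-1) ≤ (2*d-1) * Nat.choose (m+(d-1)) (d-1) := by
    have := gBound hd m (d-1)
    omega
  have hsymm : Nat.choose (m+(d-1)) (d-1) = Nat.choose (d-1+m) m := by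
    have h := Nat.choose_symm (n := m+(d-1)) (k := m) (by omega)
    have e : m + (d-1) - m = d - 1 := by omega
    rw [e] at h
    rw [h]
    congr 1
    omega
  have h2 : (2*d-1) * Nat.choose (m+(d-1)) (d-1) ≤ (2*d-1) * d^m := by
    rw [hsymm]
    exact Nat.mul_le_mul_left _ (chooseBound (by omega) m)
  exact le_trans h1 (le_trans h2 (powBound hd m hm))
open Classical in
noncomputable def chainLen (R : ℕ → ℕ → Prop) : ℕ → ℕ
  | i =>
    1 + ((Finset.range i).filter (fun j => R j i)).attach.sup
      (fun j => chainLen R j.1)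
termination_by i => i
decreasing_by
  exact Finset.mem_range.mp (Finset.mem_filter.mp j.2).1

open Classical in
lemma chainLen_eq (R : ℕ → ℕ → Prop) (i : ℕ) :
    chainLen R i = 1 + ((Finset.range i).filter (fun j => R j i)).attach.sup
      (fun j => chainLen R j.1) := by
  rw [chainLen]

lemma chainLen_pos (R : ℕ → ℕ → Prop) (i : ℕ) : 1 ≤ chainLen R i := by
  rw [chainLen_eq]; omega

open Classical in
lemma chainLen_lt {R : ℕ → ℕ → Prop} {j i : ℕ} (hj : j < i) (hR : R j i) :
    chainLen R j < chainLen R i := by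
  have hmem : j ∈ (Finset.range i).filter (fun j => R j i) :=
    Finset.mem_filter.mpr ⟨Finset.mem_range.mpr hj, hR⟩
  have : chainLen R j ≤ ((Finset.range i).filter (fun j => R j i)).attach.sup
      (fun j => chainLen R j.1) :=
    Finset.le_sup (f := fun j => chainLen R j.1) (Finset.mem_attach _ ⟨j, hmem⟩)
  rw [chainLen_eq R i]
  omega

open Classical in
lemma chain_extract (R : ℕ → ℕ → Prop) :
    ∀ c i, c ≤ chainLen R i → ∃ s : ℕ → ℕ,
      (∀ t, t+1 < c → s t < s (t+1) ∧ R (s t) (s (t+1))) ∧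
      (∀ t, t < c → s t ≤ i) ∧ (0 < c → s (c-1) = i) := by
  intro c
  induction c with
  | zero => exact fun i _ => ⟨fun _ => 0, fun t ht => by omega, fun t ht => by omega,
      fun h => by omega⟩
  | succ c ihc =>
    intro i hci
    rcases Nat.eq_zero_or_pos c with rfl | hc
    · exact ⟨fun _ => i, fun t ht => by omega, fun t ht => le_refl i, fun _ => rfl⟩
    · have hsup : c ≤ ((Finset.range i).filter (fun j => R j i)).attach.sup
          (fun j => chainLen R j.1) := by
        rw [chainLen_eq] at hci
        omega
      have hFlne : ((Finset.range i).filter (fun j => R j i)).attach.Nonempty := by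
        by_contra hne
        rw [Finset.not_nonempty_iff_eq_empty] at hne
        rw [hne] at hsup
        simp at hsup
        omega
      obtain ⟨jj, _, hjje⟩ := Finset.exists_mem_eq_sup _ hFlne
        (fun j : {x // x ∈ (Finset.range i).filter (fun j => R j i)} => chainLen R j.1)
      have hjc : c ≤ chainLen R jj.1 := by omega
      have hjmem' := Finset.mem_filter.mp jj.2
      have hjmem : jj.1 < i ∧ R jj.1 i := ⟨Finset.mem_range.mp hjmem'.1, hjmem'.2⟩
      obtain ⟨s, hs1, hs2, hs3⟩ := ihc jj.1 hjc
      refine ⟨fun t => if t < c then s t else i, ?_, ?_, ?_⟩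
      · intro t ht
        dsimp only
        by_cases h1 : t + 1 < c
        · rw [if_pos (by omega), if_pos h1]
          exact hs1 t h1
        · have htc : t = c - 1 := by omega
          rw [if_pos (by omega), if_neg (by omega)]
          have := hs3 hc
          subst htc
          rw [this]
          exact ⟨hjmem.1, hjmem.2⟩
      · intro t ht
        dsimp only
        by_cases h1 : t < c
        · rw [if_pos h1]
          exact le_trans (hs2 t h1) (le_of_lt hjmem.1)
        · rw [if_neg h1]
      · intro _
        dsimp only
        simp only [Nat.add_sub_cancel]
        rw [if_neg (by omega)]

lemma consec_mono {s : ℕ → ℕ} {k : ℕ} (hc : ∀ t, t+1 < k → s t < s (t+1)) :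
    ∀ t t', t < t' → t' < k → s t < s t' := by
  intro t t' htt' ht'
  induction t' with
  | zero => omega
  | succ t'' ih =>
    rcases Nat.lt_or_ge t t'' with h | h
    · exact lt_trans (ih h (by omega)) (hc t'' (by omega))
    · have he : t = t'' := by omega
      subst he
      exact hc t (by omega)

lemma erdosSzekeres {k n : ℕ} (hk : 1 ≤ k) (hn : (k-1)*(k-1) + 1 ≤ n) (h : ℕ → ℕ)
    (hinj : ∀ a b, a < n → b < n → h a = h b → a = b) :
    ∃ s : ℕ → ℕ, (∀ t t', t < t' → t' < k → s t < s t') ∧ (∀ t, t < k → s t < n) ∧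
      ((∀ t t', t < t' → t' < k → h (s t) < h (s t')) ∨
       (∀ t t', t < t' → t' < k → h (s t') < h (s t))) := by
  classical
  set R1 : ℕ → ℕ → Prop := fun a b => a < b ∧ h a < h b with hR1
  set R2 : ℕ → ℕ → Prop := fun a b => a < b ∧ h b < h a with hR2
  by_cases hbig : ∃ i, i < n ∧ (k ≤ chainLen R1 i ∨ k ≤ chainLen R2 i)
  · obtain ⟨i, hin, hcase⟩ := hbig
    rcases hcase with hc1 | hc1
    · obtain ⟨s, hs1, hs2, _⟩ := chain_extract R1 k i hc1
      refine ⟨s, consec_mono (fun t ht => (hs1 t ht).1), ?_, Or.inl ?_⟩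
      · intro t ht
        exact lt_of_le_of_lt (hs2 t ht) hin
      · exact consec_mono (s := fun t => h (s t)) (fun t ht => (hs1 t ht).2.2)
    · obtain ⟨s, hs1, hs2, _⟩ := chain_extract R2 k i hc1
      refine ⟨s, consec_mono (fun t ht => (hs1 t ht).1), ?_, Or.inr ?_⟩
      · intro t ht
        exact lt_of_le_of_lt (hs2 t ht) hin
      · have : ∀ t, t+1 < k → h (s (t+1)) < h (s t) := fun t ht => (hs1 t ht).2.2
        intro t t' htt' ht'
        -- decreasing: use consec_mono on reversed? prove directly by induction
        induction t' with
        | zero => omega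
        | succ t'' ih =>
          rcases Nat.lt_or_ge t t'' with hlt | hge
          · exact lt_trans (this t'' (by omega)) (ih hlt (by omega))
          · have he : t = t'' := by omega
            subst he
            exact this t (by omega)
  · exfalso
    push_neg at hbig
    have hmap : ∀ i ∈ Finset.range n,
        (chainLen R1 i - 1, chainLen R2 i - 1) ∈
          Finset.range (k-1) ×ˢ Finset.range (k-1) := by
      intro i hi
      rw [Finset.mem_range] at hi
      obtain ⟨hb1, hb2⟩ := hbig i hi
      have := chainLen_pos R1 i
      have := chainLen_pos R2 i
      rw [Finset.mem_product, Finset.mem_range, Finset.mem_range]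
      omega
    have hinjOn : ∀ a ∈ Finset.range n, ∀ b ∈ Finset.range n,
        (chainLen R1 a - 1, chainLen R2 a - 1) = (chainLen R1 b - 1, chainLen R2 b - 1) →
        a = b := by
      intro a ha b hb heq
      rw [Finset.mem_range] at ha hb
      by_contra hab
      rcases Nat.lt_or_ge a b with hlt | hge
      · rcases Nat.lt_or_ge (h a) (h b) with hv | hv
        · have := chainLen_lt hlt (show R1 a b from ⟨hlt, hv⟩)
          have := chainLen_pos R1 a
          have := chainLen_pos R1 b
          have := congrArg Prod.fst heq
          simp at this
          omega
        · have hv' : h b < h a := by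
            rcases Nat.lt_or_ge (h b) (h a) with h' | h'
            · exact h'
            · exact absurd (hinj a b ha hb (by omega)) hab
          have := chainLen_lt hlt (show R2 a b from ⟨hlt, hv'⟩)
          have := chainLen_pos R2 a
          have := chainLen_pos R2 b
          have := congrArg Prod.snd heq
          simp at this
          omega
      · have hlt : b < a := by omega
        rcases Nat.lt_or_ge (h b) (h a) with hv | hv
        · have := chainLen_lt hlt (show R1 b a from ⟨hlt, hv⟩)
          have := chainLen_pos R1 a
          have := chainLen_pos R1 b
          have := congrArg Prod.fst heq
          simp at this
          omega
        · have hv' : h a < h b := by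
            rcases Nat.lt_or_ge (h a) (h b) with h' | h'
            · exact h'
            · exact absurd (hinj a b ha hb (by omega)).symm (fun hh => hab hh.symm)
          have := chainLen_lt hlt (show R2 b a from ⟨hlt, hv'⟩)
          have := chainLen_pos R2 a
          have := chainLen_pos R2 b
          have := congrArg Prod.snd heq
          simp at this
          omega
    have hcard := Finset.card_le_card_of_injOn _ hmap hinjOn
    rw [Finset.card_range, Finset.card_product, Finset.card_range] at hcard
    omega
lemma mem_nbr_singleton {V : Type} {G : SimpleGraph V} {x v : V} :
    v ∈ nbr G {x} ↔ v ≠ x ∧ G.Adj v x := by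
  constructor
  · rintro ⟨h1, y, hy, h2⟩
    rw [Set.mem_singleton_iff] at hy
    exact ⟨fun he => h1 (he ▸ Set.mem_singleton x), hy ▸ h2⟩
  · rintro ⟨h1, h2⟩
    exact ⟨fun he => h1 (Set.mem_singleton_iff.mp he), x, Set.mem_singleton x, h2⟩

lemma inter_restrict {V : Type} {X Y R R' : Set V} (h : X ∩ R = Y ∩ R) (hR : R' ⊆ R) :
    X ∩ R' = Y ∩ R' := by
  ext v
  constructor
  · rintro ⟨h1, h2⟩
    have hv : v ∈ Y ∩ R := h ▸ (⟨h1, hR h2⟩ : v ∈ X ∩ R)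
    exact ⟨hv.1, h2⟩
  · rintro ⟨h1, h2⟩
    have hv : v ∈ X ∩ R := h.symm ▸ (⟨h1, hR h2⟩ : v ∈ Y ∩ R)
    exact ⟨hv.1, h2⟩

lemma finish {V : Type} {G : SimpleGraph V} {L : RopeLadderData V} {N k : ℕ}
    (C : IsShuffledConfig G N L) (hk : 1 ≤ k)
    (q₁ q₂ : ℕ → V) (n₁ n₂ : ℕ) (sel : ℕ → ℕ)
    (hn₁ : 0 < n₁) (hn₂ : 0 < n₂)
    (hq₁ : IsIndPathOn G q₁ n₁) (hq₂ : IsIndPathOn G q₂ n₂)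
    (hset₁ : pathSet q₁ n₁ ⊆ L.rail₁) (hset₂ : pathSet q₂ n₂ ⊆ L.rail₂)
    (hselN : ∀ t < k, sel t < N)
    (hselinj : ∀ t < k, ∀ t' < k, sel t = sel t' → t = t')
    (S₁ S₂ : ℕ → Finset ℕ)
    (hS₁ : ∀ t < k, ∀ a, a ∈ S₁ t ↔ a < n₁ ∧ q₁ a ∈ nbr G {L.top (sel t)})
    (hS₂ : ∀ t < k, ∀ a, a ∈ S₂ t ↔ a < n₂ ∧ q₂ a ∈ nbr G {L.bot (sel t)})
    (hne₁ : ∀ t < k, (S₁ t).Nonempty) (hne₂ : ∀ t < k, (S₂ t).Nonempty)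
    (hsep₁ : ∀ t t', t < t' → t' < k → ∀ a ∈ S₁ t, ∀ b ∈ S₁ t', a < b)
    (hsep₂ : ∀ t t', t < t' → t' < k → ∀ a ∈ S₂ t, ∀ b ∈ S₂ t', a < b) :
    ∃ L' : RopeLadderData V, IsRopeConfig G k L' := by
  classical
  refine ⟨⟨n₁, n₂, q₁, q₂, (fun i => if i < k then L.m (sel i) else 1),
    (fun i => if i < k then L.φ (sel i) else (fun _ => q₁ 0))⟩, ?_⟩
  set L' : RopeLadderData V := ⟨n₁, n₂, q₁, q₂,
    (fun i => if i < k then L.m (sel i) else 1),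
    (fun i => if i < k then L.φ (sel i) else (fun _ => q₁ 0))⟩ with hL'
  have hrail₁ : L'.rail₁ = pathSet q₁ n₁ := rfl
  have hrail₂ : L'.rail₂ = pathSet q₂ n₂ := rfl
  have hm' : ∀ i, i < k → L'.m i = L.m (sel i) := by
    intro i hi
    show (if i < k then L.m (sel i) else 1) = L.m (sel i)
    rw [if_pos hi]
  have hφ' : ∀ i, i < k → L'.φ i = L.φ (sel i) := by
    intro i hi
    show (if i < k then L.φ (sel i) else (fun _ => q₁ 0)) = L.φ (sel i)
    rw [if_pos hi]
  have hrung : ∀ i, i < k → L'.rung i = L.rung (sel i) := by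
    intro i hi
    unfold RopeLadderData.rung
    rw [hm' i hi, hφ' i hi]
  have htop : ∀ i, i < k → L'.top i = L.top (sel i) := by
    intro i hi
    unfold RopeLadderData.top
    rw [hφ' i hi]
  have hbot : ∀ i, i < k → L'.bot i = L.bot (sel i) := by
    intro i hi
    unfold RopeLadderData.bot
    rw [hφ' i hi, hm' i hi]
  have hA₁set : ∀ t, t < k → nbr G {L.top (sel t)} ∩ pathSet q₁ n₁
      = q₁ '' {a | a ∈ S₁ t} := by
    intro t ht
    ext v
    constructor
    · rintro ⟨hv1, a, ha, rfl⟩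
      exact ⟨a, (hS₁ t ht a).mpr ⟨ha, hv1⟩, rfl⟩
    · rintro ⟨a, ha, rfl⟩
      obtain ⟨h1, h2⟩ := (hS₁ t ht a).mp ha
      exact ⟨h2, a, h1, rfl⟩
  have hA₂set : ∀ t, t < k → nbr G {L.bot (sel t)} ∩ pathSet q₂ n₂
      = q₂ '' {a | a ∈ S₂ t} := by
    intro t ht
    ext v
    constructor
    · rintro ⟨hv1, a, ha, rfl⟩
      exact ⟨a, (hS₂ t ht a).mpr ⟨ha, hv1⟩, rfl⟩
    · rintro ⟨a, ha, rfl⟩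
      obtain ⟨h1, h2⟩ := (hS₂ t ht a).mp ha
      exact ⟨h2, a, h1, rfl⟩
  refine ⟨⟨hn₁, hn₂, ?_, hq₁, hq₂, ?_, ?_, ?_, ?_, ?_, ?_, ?_, ?_, ?_, ?_, ?_⟩, ?_, ?_⟩
  · -- posm
    intro i hi
    rw [hm' i hi]
    exact C.posm _ (hselN i hi)
  · -- pathr
    intro i hi
    rw [hm' i hi, hφ' i hi]
    exact C.pathr _ (hselN i hi)
  · -- disj₁₂
    exact Set.disjoint_of_subset hset₁ hset₂ C.disj₁₂
  · -- disj₁r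
    intro i hi
    rw [hrung i hi]
    exact Set.disjoint_of_subset hset₁ (le_refl _) (C.disj₁r _ (hselN i hi))
  · -- disj₂r
    intro i hi
    rw [hrung i hi]
    exact Set.disjoint_of_subset hset₂ (le_refl _) (C.disj₂r _ (hselN i hi))
  · -- disjrr
    intro i hi j hj hij
    rw [hrung i hi, hrung j hj]
    exact C.disjrr _ (hselN i hi) _ (hselN j hj)
      (fun he => hij (hselinj i hi j hj he))
  · -- nonadj₁₂
    intro h
    exact C.nonadj₁₂ (setsAdj_mono hset₁ hset₂ h)
  · -- nonadjrr
    intro i hi j hj hij h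
    rw [hrung i hi, hrung j hj] at h
    exact C.nonadjrr _ (hselN i hi) _ (hselN j hj)
      (fun he => hij (hselinj i hi j hj he)) h
  · -- rung₁eq
    intro i hi
    rw [hrung i hi, htop i hi]
    exact inter_restrict (C.rung₁eq _ (hselN i hi)) hset₁
  · -- rung₁ne
    intro i hi
    rw [hrung i hi, hrail₁]
    rw [inter_restrict (C.rung₁eq _ (hselN i hi)) hset₁]
    obtain ⟨a, ha⟩ := hne₁ i hi
    obtain ⟨h1, h2⟩ := (hS₁ i hi a).mp ha
    exact ⟨q₁ a, h2, a, h1, rfl⟩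
  · -- rung₂eq
    intro i hi
    rw [hrung i hi, hbot i hi]
    exact inter_restrict (C.rung₂eq _ (hselN i hi)) hset₂
  · -- rung₂ne
    intro i hi
    rw [hrung i hi, hrail₂]
    rw [inter_restrict (C.rung₂eq _ (hselN i hi)) hset₂]
    obtain ⟨a, ha⟩ := hne₂ i hi
    obtain ⟨h1, h2⟩ := (hS₂ i hi a).mp ha
    exact ⟨q₂ a, h2, a, h1, rfl⟩
  · -- appear along rail₁
    refine buildAppear hk (fun t ht => ?_) hne₁
      (fun t ht a ha => ((hS₁ t ht a).mp ha).1) hsep₁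
    rw [htop t ht]
    exact hA₁set t ht
  · -- appear along rail₂
    refine buildAppear hk (fun t ht => ?_) hne₂
      (fun t ht a ha => ((hS₂ t ht a).mp ha).1) hsep₂
    rw [hbot t ht]
    exact hA₂set t ht
lemma star_from_finset {V : Type} {G : SimpleGraph V} {d : ℕ} (hfree : K1dFree d G)
    (c : V) (T : Finset ℕ) (w : ℕ → V) (hcard : d ≤ T.card)
    (hadj : ∀ t ∈ T, G.Adj c (w t))
    (hwinj : ∀ t ∈ T, ∀ t' ∈ T, t ≠ t' → w t ≠ w t')
    (hnon : ∀ t ∈ T, ∀ t' ∈ T, t ≠ t' → ¬ G.Adj (w t) (w t')) : False := by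
  obtain ⟨T', hT'sub, hT'card⟩ := Finset.exists_subset_card_eq hcard
  have hmem : ∀ x : {x // x ∈ T'}, (x : ℕ) ∈ T := fun x => hT'sub x.2
  let eqv : {x // x ∈ T'} ≃ Fin d := T'.equivFinOfCardEq hT'card
  apply no_star hfree c (fun t => w (eqv.symm t : ℕ))
  · intro a b h
    by_cases he : ((eqv.symm a : ℕ)) = ((eqv.symm b : ℕ))
    · have : eqv.symm a = eqv.symm b := Subtype.ext he
      exact eqv.symm.injective this
    · exact absurd h (hwinj _ (hmem _) _ (hmem _) he)
  · intro t
    exact hadj _ (hmem _)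
  · intro t t' htt'
    apply hnon _ (hmem _) _ (hmem _)
    intro he
    exact htt' (eqv.symm.injective (Subtype.ext he))
  
lemma attach_sigma {V : Type} {G : SimpleGraph V} {d : ℕ} (hd : 2 ≤ d)
    (hfree : K1dFree d G) {p : ℕ → V} {n : ℕ} (hpath : IsIndPathOn G p n) (e : V) :
    ∀ T ⊆ (Finset.range n).filter (fun a => p a ∈ nbr G {e}),
      (∀ a ∈ T, ∀ b ∈ T, a ≠ b → a + 2 ≤ b ∨ b + 2 ≤ a) → T.card ≤ d - 1 := by
  intro T hT hpw
  by_contra hc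
  apply star_from_finset hfree e T p (by omega)
  · intro t ht
    have h := (Finset.mem_filter.mp (hT ht)).2
    exact (mem_nbr_singleton.mp h).2.symm
  · intro t ht t' ht' hne heq
    have h1 := Finset.mem_range.mp (Finset.mem_filter.mp (hT ht)).1
    have h2 := Finset.mem_range.mp (Finset.mem_filter.mp (hT ht')).1
    exact hne (hpath.1 t t' h1 h2 heq)
  · intro t ht t' ht' hne hadj
    have h1 := Finset.mem_range.mp (Finset.mem_filter.mp (hT ht)).1
    have h2 := Finset.mem_range.mp (Finset.mem_filter.mp (hT ht')).1
    have h3 := (hpath.2 t t' h1 h2).mp hadj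
    have h4 := hpw t ht t' ht' hne
    omega

lemma attach_mult {V : Type} {G : SimpleGraph V} {d N : ℕ} (hd : 2 ≤ d)
    (hfree : K1dFree d G) (A : ℕ → Finset ℕ) (c : V) (e : ℕ → V) (pos : ℕ)
    (hA : ∀ i, i < N → pos ∈ A i → c ≠ e i ∧ G.Adj c (e i))
    (hdist : ∀ i, i < N → ∀ j, j < N → i ≠ j → e i ≠ e j)
    (hnonadj : ∀ i, i < N → ∀ j, j < N → i ≠ j → ¬ G.Adj (e i) (e j))
    (F : Finset ℕ) (hF : F ⊆ Finset.range N) :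
    (F.filter (fun i => pos ∈ A i)).card ≤ d - 1 := by
  by_contra hc
  have hmemN : ∀ i ∈ F.filter (fun i => pos ∈ A i), i < N ∧ pos ∈ A i := fun i hi =>
    ⟨Finset.mem_range.mp (hF (Finset.mem_filter.mp hi).1), (Finset.mem_filter.mp hi).2⟩
  apply star_from_finset hfree c (F.filter (fun i => pos ∈ A i)) e (by omega)
  · intro t ht
    exact (hA t (hmemN t ht).1 (hmemN t ht).2).2
  · intro t ht t' ht' hne
    exact hdist t (hmemN t ht).1 t' (hmemN t' ht').1 hne
  · intro t ht t' ht' hne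
    exact hnonadj t (hmemN t ht).1 t' (hmemN t' ht').1 hne
/-- a `K_{1,d}`-free `ν(k,d)`-shuffled rope ladder contains a `k`-rope ladder
as an induced subgraph. -/
theorem clean_shuffled_rope_ladder (k d : ℕ) (hk : 1 ≤ k) (hd : 2 ≤ d)
    (V : Type) [Fintype V] (G : SimpleGraph V)
    (hG : IsShuffledRopeLadderGraph G (nuFn k d)) (hfree : K1dFree d G) :
    ∃ L : RopeLadderData V, IsRopeConfig G k L := by
  classical
  obtain ⟨L, C, -⟩ := hG
  set N := nuFn k d with hN
  have h1d : 1 ≤ (d-1)^2 := Nat.one_le_pow _ _ (by omega)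
  have h2d : 1 ≤ (2*d-1)^(2*d-2) := Nat.one_le_pow _ _ (by omega)
  have hB2 : 2 ≤ 2*(d-1)^2*(2*d-1)^(2*d-2) := by nlinarith
  have hN1 : 1 ≤ N := by
    rw [hN]
    unfold nuFn rhoFn
    exact Nat.one_le_pow _ _ (by omega)
  have htopmem : ∀ i, i < N → L.top i ∈ L.rung i := fun i hi => ⟨0, C.posm i hi, rfl⟩
  have hbotmem : ∀ i, i < N → L.bot i ∈ L.rung i := fun i hi =>
    ⟨L.m i - 1, by have := C.posm i hi; simp only [Set.mem_setOf_eq]; omega, rfl⟩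
  have htopdist : ∀ i, i < N → ∀ j, j < N → i ≠ j → L.top i ≠ L.top j := by
    intro i hi j hj hij he
    exact Set.disjoint_left.mp (C.disjrr i hi j hj hij) (htopmem i hi) (he ▸ htopmem j hj)
  have hbotdist : ∀ i, i < N → ∀ j, j < N → i ≠ j → L.bot i ≠ L.bot j := by
    intro i hi j hj hij he
    exact Set.disjoint_left.mp (C.disjrr i hi j hj hij) (hbotmem i hi) (he ▸ hbotmem j hj)
  have htopnadj : ∀ i, i < N → ∀ j, j < N → i ≠ j → ¬ G.Adj (L.top i) (L.top j) := by
    intro i hi j hj hij hadj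
    exact C.nonadjrr i hi j hj hij
      ⟨L.top j, mem_clNbr.mpr (Or.inr ⟨L.top i, htopmem i hi, hadj.symm⟩), htopmem j hj⟩
  have hbotnadj : ∀ i, i < N → ∀ j, j < N → i ≠ j → ¬ G.Adj (L.bot i) (L.bot j) := by
    intro i hi j hj hij hadj
    exact C.nonadjrr i hi j hj hij
      ⟨L.bot j, mem_clNbr.mpr (Or.inr ⟨L.bot i, hbotmem i hi, hadj.symm⟩), hbotmem j hj⟩
  set A₁ : ℕ → Finset ℕ :=
    fun i => (Finset.range L.n₁).filter (fun a => L.p₁ a ∈ nbr G {L.top i}) with hA₁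
  set A₂ : ℕ → Finset ℕ :=
    fun i => (Finset.range L.n₂).filter (fun a => L.p₂ a ∈ nbr G {L.bot i}) with hA₂
  have hA₁mem : ∀ i a, a ∈ A₁ i ↔ a < L.n₁ ∧ L.p₁ a ∈ nbr G {L.top i} := by
    intro i a
    rw [hA₁]
    simp [Finset.mem_filter, Finset.mem_range]
  have hA₂mem : ∀ i a, a ∈ A₂ i ↔ a < L.n₂ ∧ L.p₂ a ∈ nbr G {L.bot i} := by
    intro i a
    rw [hA₂]
    simp [Finset.mem_filter, Finset.mem_range]
  have hA₁ne : ∀ i, i < N → (A₁ i).Nonempty := by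
    intro i hi
    obtain ⟨v, hv1, hv2⟩ := C.rung₁ne i hi
    have hv : v ∈ nbr G {L.top i} ∩ L.rail₁ :=
      C.rung₁eq i hi ▸ (⟨hv1, hv2⟩ : v ∈ nbr G (L.rung i) ∩ L.rail₁)
    obtain ⟨a, ha, rfl⟩ := hv.2
    exact ⟨a, (hA₁mem i a).mpr ⟨ha, hv.1⟩⟩
  have hA₂ne : ∀ i, i < N → (A₂ i).Nonempty := by
    intro i hi
    obtain ⟨v, hv1, hv2⟩ := C.rung₂ne i hi
    have hv : v ∈ nbr G {L.bot i} ∩ L.rail₂ :=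
      C.rung₂eq i hi ▸ (⟨hv1, hv2⟩ : v ∈ nbr G (L.rung i) ∩ L.rail₂)
    obtain ⟨a, ha, rfl⟩ := hv.2
    exact ⟨a, (hA₂mem i a).mpr ⟨ha, hv.1⟩⟩
  rcases eq_or_lt_of_le hk with hk1 | hk2
  · -- k = 1
    subst hk1
    refine finish C (le_refl 1) L.p₁ L.p₂ L.n₁ L.n₂ (fun _ => 0) C.pos₁ C.pos₂
      C.path₁ C.path₂ (fun v hv => hv) (fun v hv => hv)
      (fun t _ => lt_of_lt_of_le Nat.zero_lt_one hN1) (fun t ht t' ht' _ => by omega)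
      (fun _ => A₁ 0) (fun _ => A₂ 0)
      (fun t ht a => hA₁mem 0 a) (fun t ht a => hA₂mem 0 a)
      (fun t ht => hA₁ne 0 (by omega)) (fun t ht => hA₂ne 0 (by omega))
      (fun t t' h1 h2 => by omega) (fun t t' h1 h2 => by omega)
  · -- k ≥ 2
    set M := (k-1)^2+1 with hM
    set K := rhoFn M d with hK
    have hksq : 1 ≤ (k-1)^2 := Nat.one_le_pow _ _ (by omega)
    have hM2 : 2 ≤ M := by rw [hM]; omega
    have hNK : N = rhoFn K d := by rw [hN, hK, hM]; rfl
    have hK2 : 2 ≤ K := by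
      rw [hK]
      unfold rhoFn
      calc (2:ℕ) ≤ 2*(d-1)^2*(2*d-1)^(2*d-2) := hB2
        _ = (2*(d-1)^2*(2*d-1)^(2*d-2))^1 := (pow_one _).symm
        _ ≤ (2*(d-1)^2*(2*d-1)^(2*d-2))^(M-1) :=
            Nat.pow_le_pow_right (by omega) (by rw [hM]; omega)
    have hfK : fCnt d K (d-1) ≤ N := by
      rw [hNK]
      unfold rhoFn
      exact fBound hd hK2
    have hfM : fCnt d M (d-1) ≤ K := by
      rw [hK]
      unfold rhoFn
      exact fBound hd hM2
    obtain ⟨hi₁, g₁, hg₁inj, hg₁mem, hg₁tr, hg₁sep⟩ :=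
      core hd K (d-1) (Finset.range N) A₁
        (fun i hi => hA₁ne i (Finset.mem_range.mp hi))
        (fun i _ => attach_sigma hd hfree C.path₁ (L.top i))
        (fun pos => by
          refine attach_mult hd hfree A₁ (L.p₁ pos) L.top pos ?_ htopdist htopnadj
            _ (subset_refl _)
          intro i hi hpos
          obtain ⟨h1, h2⟩ := (hA₁mem i pos).mp hpos
          exact ⟨(mem_nbr_singleton.mp h2).1, (mem_nbr_singleton.mp h2).2⟩)
        (by rw [Finset.card_range]; exact hfK)
    have hg₁N : ∀ jj : Fin K, g₁ jj < N := fun jj => Finset.mem_range.mp (hg₁mem jj)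
    set A₂' : ℕ → Finset ℕ :=
      fun j => if h : j < K then A₂ (g₁ ⟨j, h⟩) else ∅ with hA₂'
    have hA₂'val : ∀ j (h : j < K), A₂' j = A₂ (g₁ ⟨j, h⟩) := by
      intro j h
      rw [hA₂']
      dsimp only
      rw [dif_pos h]
    obtain ⟨hi₂, g₂, hg₂inj, hg₂mem, hg₂tr, hg₂sep⟩ :=
      core hd M (d-1) (Finset.range K) A₂'
        (fun j hj => by
          rw [hA₂'val j (Finset.mem_range.mp hj)]
          exact hA₂ne _ (hg₁N _))
        (fun j hj => by
          rw [hA₂'val j (Finset.mem_range.mp hj)]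
          exact attach_sigma hd hfree C.path₂ (L.bot (g₁ ⟨j, Finset.mem_range.mp hj⟩)))
        (fun pos => by
          refine le_trans (Finset.card_le_card_of_injOn
            (fun j => if h : j < K then (g₁ ⟨j, h⟩ : ℕ) else 0) ?_ ?_)
            (attach_mult hd hfree A₂ (L.p₂ pos) L.bot pos ?_ hbotdist hbotnadj
              (Finset.range N) (subset_refl _))
          · intro j hj
            obtain ⟨hj1, hj2⟩ := Finset.mem_filter.mp hj
            have hjK := Finset.mem_range.mp hj1
            rw [hA₂'val j hjK] at hj2
            dsimp only
            rw [dif_pos hjK]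
            exact Finset.mem_filter.mpr ⟨Finset.mem_range.mpr (hg₁N _), hj2⟩
          · intro j hj j' hj' he
            have hjK := Finset.mem_range.mp
              (Finset.mem_filter.mp (Finset.mem_coe.mp hj)).1
            have hjK' := Finset.mem_range.mp
              (Finset.mem_filter.mp (Finset.mem_coe.mp hj')).1
            dsimp only at he
            rw [dif_pos hjK, dif_pos hjK'] at he
            exact congrArg Fin.val (hg₁inj he)
          · intro i hi hpos
            obtain ⟨h1, h2⟩ := (hA₂mem i pos).mp hpos
            exact ⟨(mem_nbr_singleton.mp h2).1, (mem_nbr_singleton.mp h2).2⟩)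
        (by rw [Finset.card_range]; exact hfM)
    have hg₂K : ∀ j : Fin M, g₂ j < K := fun j => Finset.mem_range.mp (hg₂mem j)
    set hseq : ℕ → ℕ := fun t => if ht : t < M then (g₂ ⟨t, ht⟩ : ℕ) else 0 with hhseq
    have hseqval : ∀ t (ht : t < M), hseq t = g₂ ⟨t, ht⟩ := by
      intro t ht
      rw [hhseq]
      dsimp only
      rw [dif_pos ht]
    obtain ⟨s, hsmono, hsM, hcases⟩ := erdosSzekeres (by omega : 1 ≤ k)
      (by rw [hM, pow_two] : (k-1)*(k-1)+1 ≤ M) hseq (by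
        intro a b ha hb he
        rw [hseqval a ha, hseqval b hb] at he
        exact congrArg Fin.val (hg₂inj he))
    set n₁' := min hi₁ L.n₁ with hn₁'
    set n₂' := min hi₂ L.n₂ with hn₂'
    have hle₁ : n₁' ≤ L.n₁ := by rw [hn₁']; exact min_le_right _ _
    have hle₂ : n₂' ≤ L.n₂ := by rw [hn₂']; exact min_le_right _ _
    have hn₁pos : 0 < n₁' := by
      obtain ⟨a, ha⟩ := hg₁tr ⟨0, by omega⟩
      obtain ⟨ha1, ha2⟩ := Finset.mem_filter.mp ha
      have := ((hA₁mem _ a).mp ha1).1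
      omega
    have hn₂pos : 0 < n₂' := by
      obtain ⟨a, ha⟩ := hg₂tr ⟨0, by omega⟩
      obtain ⟨ha1, ha2⟩ := Finset.mem_filter.mp ha
      rw [hA₂'val _ (hg₂K _)] at ha1
      have := ((hA₂mem _ a).mp ha1).1
      omega
    have hfil₁ : ∀ i, (A₁ i).filter (· < n₁') = (A₁ i).filter (· < hi₁) := by
      intro i
      ext a
      simp only [Finset.mem_filter]
      constructor
      · rintro ⟨h1, h2⟩
        exact ⟨h1, by omega⟩
      · rintro ⟨h1, h2⟩
        have := ((hA₁mem i a).mp h1).1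
        exact ⟨h1, by omega⟩
    have hfil₂ : ∀ i, (A₂ i).filter (· < n₂') = (A₂ i).filter (· < hi₂) := by
      intro i
      ext a
      simp only [Finset.mem_filter]
      constructor
      · rintro ⟨h1, h2⟩
        exact ⟨h1, by omega⟩
      · rintro ⟨h1, h2⟩
        have := ((hA₂mem i a).mp h1).1
        exact ⟨h1, by omega⟩
    set sel : ℕ → ℕ :=
      fun t => if ht : t < k then (g₁ ⟨g₂ ⟨s t, hsM t ht⟩, hg₂K _⟩ : ℕ) else 0 with hsel
    have hselval : ∀ t (ht : t < k), sel t = g₁ ⟨g₂ ⟨s t, hsM t ht⟩, hg₂K _⟩ := by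
      intro t ht
      rw [hsel]
      dsimp only
      rw [dif_pos ht]
    have hselN : ∀ t, t < k → sel t < N := by
      intro t ht
      rw [hselval t ht]
      exact hg₁N _
    have hselinj : ∀ t, t < k → ∀ t', t' < k → sel t = sel t' → t = t' := by
      intro t ht t' ht' he
      rw [hselval t ht, hselval t' ht'] at he
      have h3 : g₂ ⟨s t, hsM t ht⟩ = g₂ ⟨s t', hsM t' ht'⟩ :=
        congrArg Fin.val (hg₁inj he)
      have h4 : s t = s t' := congrArg Fin.val (hg₂inj h3)
      by_contra hne
      rcases Nat.lt_or_ge t t' with hlt | hge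
      · exact absurd h4 (Nat.ne_of_lt (hsmono t t' hlt ht'))
      · exact absurd h4.symm (Nat.ne_of_lt (hsmono t' t (by omega) ht))
    have htr₁ : ∀ t, t < k → ((A₁ (sel t)).filter (· < n₁')).Nonempty := by
      intro t ht
      rw [hfil₁, hselval t ht]
      exact hg₁tr _
    have htr₂ : ∀ t, t < k → ((A₂ (sel t)).filter (· < n₂')).Nonempty := by
      intro t ht
      rw [hfil₂, hselval t ht]
      have h := hg₂tr ⟨s t, hsM t ht⟩
      rw [hA₂'val _ (hg₂K _)] at h
      exact h
    have hsep₂' : ∀ t t', t < t' → t' < k →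
        ∀ a ∈ (A₂ (sel t)).filter (· < n₂'),
        ∀ b ∈ (A₂ (sel t')).filter (· < n₂'), a < b := by
      intro t t' htt' ht' a ha b hb
      rw [hfil₂, hselval t (by omega)] at ha
      rw [hfil₂, hselval t' ht'] at hb
      have hlt : (⟨s t, hsM t (by omega)⟩ : Fin M) < ⟨s t', hsM t' ht'⟩ :=
        Fin.mk_lt_mk.mpr (hsmono t t' htt' ht')
      refine hg₂sep _ _ hlt a ?_ b ?_
      · rw [hA₂'val _ (hg₂K _)]
        exact ha
      · rw [hA₂'val _ (hg₂K _)]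
        exact hb
    have hS₂mem : ∀ t, t < k → ∀ a, a ∈ (A₂ (sel t)).filter (· < n₂') ↔
        a < n₂' ∧ L.p₂ a ∈ nbr G {L.bot (sel t)} := by
      intro t ht a
      rw [Finset.mem_filter, hA₂mem]
      constructor
      · rintro ⟨⟨h1, h2⟩, h3⟩
        exact ⟨h3, h2⟩
      · rintro ⟨h1, h2⟩
        exact ⟨⟨by omega, h2⟩, h1⟩
    rcases hcases with hinc | hdec
    · -- increasing case : rails trimmed, no reversal
      have hsep₁' : ∀ t t', t < t' → t' < k →
          ∀ a ∈ (A₁ (sel t)).filter (· < n₁'),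
          ∀ b ∈ (A₁ (sel t')).filter (· < n₁'), a < b := by
        intro t t' htt' ht' a ha b hb
        rw [hfil₁, hselval t (by omega)] at ha
        rw [hfil₁, hselval t' ht'] at hb
        refine hg₁sep ⟨g₂ ⟨s t, hsM t (by omega)⟩, hg₂K _⟩
          ⟨g₂ ⟨s t', hsM t' ht'⟩, hg₂K _⟩ ?_ a ha b hb
        apply Fin.mk_lt_mk.mpr
        have h1 := hinc t t' htt' ht'
        rw [hseqval (s t) (hsM t (by omega)), hseqval (s t') (hsM t' ht')] at h1
        exact h1
      refine finish C (by omega) L.p₁ L.p₂ n₁' n₂' sel hn₁pos hn₂pos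
        (indPath_trim C.path₁ hle₁) (indPath_trim C.path₂ hle₂)
        (pathSet_mono hle₁) (pathSet_mono hle₂) hselN hselinj
        (fun t => (A₁ (sel t)).filter (· < n₁'))
        (fun t => (A₂ (sel t)).filter (· < n₂')) ?_ hS₂mem htr₁ htr₂ hsep₁' hsep₂'
      intro t ht a
      rw [Finset.mem_filter, hA₁mem]
      constructor
      · rintro ⟨⟨h1, h2⟩, h3⟩
        exact ⟨h3, h2⟩
      · rintro ⟨h1, h2⟩
        exact ⟨⟨by omega, h2⟩, h1⟩
    · -- decreasing case : reverse rail₁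
      have hsep₁' : ∀ t t', t < t' → t' < k →
          ∀ a ∈ ((A₁ (sel t)).filter (· < n₁')).image (fun a => n₁' - 1 - a),
          ∀ b ∈ ((A₁ (sel t')).filter (· < n₁')).image (fun a => n₁' - 1 - a), a < b := by
        intro t t' htt' ht' a ha b hb
        obtain ⟨a₀, ha₀, rfl⟩ := Finset.mem_image.mp ha
        obtain ⟨b₀, hb₀, rfl⟩ := Finset.mem_image.mp hb
        have ha₀' : a₀ < n₁' := (Finset.mem_filter.mp ha₀).2
        have hb₀' : b₀ < n₁' := (Finset.mem_filter.mp hb₀).2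
        rw [hfil₁, hselval t (by omega)] at ha₀
        rw [hfil₁, hselval t' ht'] at hb₀
        have hba : b₀ < a₀ := by
          refine hg₁sep ⟨g₂ ⟨s t', hsM t' ht'⟩, hg₂K _⟩
            ⟨g₂ ⟨s t, hsM t (by omega)⟩, hg₂K _⟩ ?_ b₀ hb₀ a₀ ha₀
          apply Fin.mk_lt_mk.mpr
          have h1 := hdec t t' htt' ht'
          rw [hseqval (s t) (hsM t (by omega)), hseqval (s t') (hsM t' ht')] at h1
          exact h1
        omega
      refine finish C (by omega) (fun a => L.p₁ (n₁' - 1 - a)) L.p₂ n₁' n₂' sel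
        hn₁pos hn₂pos
        (indPath_reverse (indPath_trim C.path₁ hle₁)) (indPath_trim C.path₂ hle₂)
        (by rw [pathSet_reverse]; exact pathSet_mono hle₁) (pathSet_mono hle₂)
        hselN hselinj
        (fun t => ((A₁ (sel t)).filter (· < n₁')).image (fun a => n₁' - 1 - a))
        (fun t => (A₂ (sel t)).filter (· < n₂')) ?_ hS₂mem
        (fun t ht => (htr₁ t ht).image _) htr₂ hsep₁' hsep₂'
      intro t ht b
      constructor
      · intro hb
        obtain ⟨a, ha, rfl⟩ := Finset.mem_image.mp hb
        obtain ⟨ha1, ha2⟩ := Finset.mem_filter.mp ha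
        obtain ⟨ha3, ha4⟩ := (hA₁mem _ a).mp ha1
        have he : n₁' - 1 - (n₁' - 1 - a) = a := by omega
        refine ⟨by omega, ?_⟩
        show L.p₁ (n₁' - 1 - (n₁' - 1 - a)) ∈ nbr G {L.top (sel t)}
        rw [he]
        exact ha4
      · rintro ⟨h1, h2⟩
        refine Finset.mem_image.mpr ⟨n₁' - 1 - b, Finset.mem_filter.mpr
          ⟨(hA₁mem _ _).mpr ⟨by omega, h2⟩, by omega⟩, ?_⟩
        show n₁' - 1 - (n₁' - 1 - b) = b
        omega
end

section
/- Let G be a graph that has a strong bramble 𝓑. Then there is an induced path P in G such that N[P] ∩ B ≠ ∅ for every B ∈ 𝓑, where N[P] denotes the closed neighborhood of V(P). -/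
open SimpleGraph

section SBAux
variable {V : Type}

lemma sb_mem_clNbr_of_mem {G : SimpleGraph V} {X : Set V} {v : V} (h : v ∈ X) :
    v ∈ clNbr G X := Or.inl h

lemma sb_mem_clNbr_of_adj {G : SimpleGraph V} {X : Set V} {v x : V} (hx : x ∈ X)
    (h : G.Adj v x) : v ∈ clNbr G X := by
  by_cases hv : v ∈ X
  · exact Or.inl hv
  · exact Or.inr ⟨hv, x, hx, h⟩

lemma sb_notMem_clNbr {G : SimpleGraph V} {X : Set V} {v : V} (h : v ∉ clNbr G X) :
    v ∉ X ∧ ∀ x ∈ X, ¬ G.Adj v x :=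
  ⟨fun hv => h (Or.inl hv), fun x hx hadj => h (sb_mem_clNbr_of_adj hx hadj)⟩

lemma sb_clNbr_mono {G : SimpleGraph V} {X Y : Set V} (h : X ⊆ Y) :
    clNbr G X ⊆ clNbr G Y := by
  intro v hv
  rcases hv with hv | ⟨_, x, hx, hadj⟩
  · exact Or.inl (h hv)
  · exact sb_mem_clNbr_of_adj (h hx) hadj

/-- A walk in `G` staying inside `S`, given as a function. -/
def SBWalk (G : SimpleGraph V) (S : Set V) (r : ℕ → V) (L : ℕ) : Prop :=
  (∀ i ≤ L, r i ∈ S) ∧ ∀ i < L, G.Adj (r i) (r (i + 1))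

lemma sbwalk_of_connected {G : SimpleGraph V} {X : Set V} (hX : (G.induce X).Connected)
    {a b : V} (ha : a ∈ X) (hb : b ∈ X) :
    ∃ r L, SBWalk G X r L ∧ r 0 = a ∧ r L = b := by
  obtain ⟨w⟩ := hX.preconnected ⟨a, ha⟩ ⟨b, hb⟩
  refine ⟨fun i => (w.getVert (min i w.length)).1, w.length,
    ⟨fun i _ => (w.getVert _).2, ?_⟩, ?_, ?_⟩
  · intro i hi
    have h1 : min i w.length = i := by omega
    have h2 : min (i + 1) w.length = i + 1 := by omega
    show G.Adj (w.getVert (min i w.length)).1 (w.getVert (min (i + 1) w.length)).1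
    rw [h1, h2]
    exact w.adj_getVert_succ hi
  · simp
  · simp

/-- The hit family of a path. -/
def sbHit {V : Type} (G : SimpleGraph V) (B : Set (Set V)) (f : ℕ → V) (n : ℕ) :
    Set (Set V) :=
  {X ∈ B | (clNbr G (pathSet f n) ∩ X).Nonempty}

end SBAux



/-- a graph with a strong bramble has an induced path whose closed
neighborhood meets every bramble element. -/
theorem dominating_path_for_strong_bramble (V : Type) [Fintype V] (G : SimpleGraph V)
    (B : Set (Set V)) (hB : IsStrongBramble G B) :
    ∃ (p : ℕ → V) (n : ℕ), 0 < n ∧ IsIndPathOn G p n ∧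
      ∀ X ∈ B, (clNbr G (pathSet p n) ∩ X).Nonempty := by
  classical
  obtain ⟨⟨B0, hB0⟩, hconn, hint⟩ := hB
  have hhit_sub : ∀ f n, sbHit G B f n ⊆ B := fun f n X hX => hX.1
  -- base path: a single vertex of B0
  obtain ⟨⟨v0, hv0⟩⟩ := (hconn B0 hB0).nonempty
  have hsingle : IsIndPathOn G (fun _ => v0) 1 := by
    constructor
    · intro a b ha hb _; omega
    · intro a b ha hb
      have ha0 : a = 0 := by omega
      have hb0 : b = 0 := by omega
      subst ha0; subst hb0
      simp
  have hB0hit : B0 ∈ sbHit G B (fun _ => v0) 1 :=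
    ⟨hB0, v0, sb_mem_clNbr_of_mem ⟨0, by norm_num, rfl⟩, hv0⟩
  -- the maximum number of hit sets over all induced paths
  set PS : Set ℕ :=
    {m | ∃ f n, 0 < n ∧ IsIndPathOn G f n ∧ (sbHit G B f n).ncard = m} with hPS
  have hPSne : PS.Nonempty := ⟨_, (fun _ => v0), 1, one_pos, hsingle, rfl⟩
  have hPSbdd : BddAbove PS := by
    refine ⟨B.ncard, ?_⟩
    rintro m ⟨f, n, _, _, rfl⟩
    exact Set.ncard_le_ncard (hhit_sub f n) (Set.toFinite _)
  set M := sSup PS with hM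
  have hMmem := Nat.sSup_mem hPSne hPSbdd
  have hMle : ∀ f n, 0 < n → IsIndPathOn G f n → (sbHit G B f n).ncard ≤ M :=
    fun f n hn hf => le_csSup hPSbdd ⟨f, n, hn, hf, rfl⟩
  have hMpos : 0 < M := by
    have h1 : 0 < (sbHit G B (fun _ => v0) 1).ncard :=
      (Set.ncard_pos (Set.toFinite _)).mpr ⟨B0, hB0hit⟩
    exact lt_of_lt_of_le h1 (hMle _ 1 one_pos hsingle)
  -- minimal length among maximizers
  set QS : Set ℕ :=
    {n | ∃ f, 0 < n ∧ IsIndPathOn G f n ∧ (sbHit G B f n).ncard = M} with hQS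
  have hQSne : QS.Nonempty := by
    obtain ⟨f, n, hn, hf, hcard⟩ := hMmem
    exact ⟨n, f, hn, hf, hcard⟩
  obtain ⟨p, htpos, hp, hpcard⟩ := Nat.sInf_mem hQSne
  set t := sInf QS with ht
  refine ⟨p, t, htpos, hp, ?_⟩
  by_contra hcon
  push_neg at hcon
  obtain ⟨Bs, hBsB, hBsN⟩ := hcon
  have hBsempty : ∀ v, v ∈ Bs → v ∉ clNbr G (pathSet p t) := by
    intro v hv hvN
    have : v ∈ clNbr G (pathSet p t) ∩ Bs := ⟨hvN, hv⟩
    rw [hBsN] at this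
    exact this
  -- shifted path p'
  set p' : ℕ → V := fun i => p (i + 1) with hp'
  have hshift_lt : (sbHit G B p' (t - 1)).ncard < M := by
    rcases Nat.lt_or_ge t 2 with h2 | h2
    · have ht1 : t - 1 = 0 := by omega
      rw [ht1]
      have hps : pathSet p' 0 = ∅ := by simp [pathSet]
      have hcl : clNbr G (pathSet p' 0) = ∅ := by
        rw [hps]; simp [clNbr, nbr]
      have : sbHit G B p' 0 = ∅ := by
        ext X
        simp [sbHit, hcl]
      rw [this]; simpa using hMpos
    · have hp'path : IsIndPathOn G p' (t - 1) := by
        constructor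
        · intro a b ha hb heq
          have := hp.1 (a + 1) (b + 1) (by omega) (by omega) heq
          omega
        · intro a b ha hb
          rw [hp.2 (a + 1) (b + 1) (by omega) (by omega)]
          omega
      have hle := hMle p' (t - 1) (by omega) hp'path
      rcases lt_or_eq_of_le hle with h | h
      · exact h
      · exfalso
        have hmem : (t - 1) ∈ QS := ⟨p', by omega, hp'path, h⟩
        have := Nat.sInf_le hmem
        omega
  -- a set Ba hit by p but not by the shift: attaches only at p 0
  obtain ⟨Ba, hBahit, hBanot⟩ : ∃ Ba ∈ sbHit G B p t, Ba ∉ sbHit G B p' (t - 1) := by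
    by_contra h
    push_neg at h
    have := Set.ncard_le_ncard h (Set.toFinite _)
    omega
  obtain ⟨hBaB, u, huN, huBa⟩ := hBahit
  have hBaNS : ∀ v ∈ Ba, v ∉ clNbr G (pathSet p' (t - 1)) := by
    intro v hv hvN
    exact hBanot ⟨hBaB, v, hvN, hv⟩
  have hkey : ∀ v, v ∈ Ba → v ∈ clNbr G (pathSet p t) → v ∉ pathSet p t →
      G.Adj v (p 0) ∧ ∀ b, 0 < b → b < t → ¬ G.Adj v (p b) := by
    intro v hvBa hvN hvP
    have hadjonly : ∀ a, a < t → G.Adj v (p a) → a = 0 := by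
      intro a hat hadj
      by_contra ha0
      have hmem' : p a ∈ pathSet p' (t - 1) := by
        refine ⟨a - 1, show a - 1 < t - 1 by omega, ?_⟩
        show p (a - 1 + 1) = p a
        congr 1
        omega
      exact hBaNS v hvBa (sb_mem_clNbr_of_adj hmem' hadj)
    rcases hvN with hvP' | ⟨_, x, hx, hadj⟩
    · exact absurd hvP' hvP
    · obtain ⟨a, hat, rfl⟩ := hx
      have ha0 := hadjonly a hat hadj
      subst ha0
      exact ⟨hadj, fun b hb0 hbt hadj' => by have := hadjonly b hbt hadj'; omega⟩
  -- minimal connecting walk inside Ba from Bs to N[P]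
  obtain ⟨z, hzBa, hzBs⟩ := hint Ba hBaB Bs hBsB
  set A : Set ℕ :=
    {L | ∃ r, SBWalk G Ba r L ∧ r 0 ∈ Bs ∧ r L ∈ clNbr G (pathSet p t)} with hA
  have hAne : A.Nonempty := by
    obtain ⟨r, L, hw, h0, hL⟩ := sbwalk_of_connected (hconn Ba hBaB) hzBa huBa
    exact ⟨L, r, hw, by rw [h0]; exact hzBs, by rw [hL]; exact huN⟩
  obtain ⟨r, hrw, hr0, hrL⟩ := Nat.sInf_mem hAne
  set L0 := sInf A with hL0
  have hAmin : ∀ L' ∈ A, L0 ≤ L' := fun _ h => Nat.sInf_le h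
  have hL0pos : 0 < L0 := by
    rcases Nat.eq_zero_or_pos L0 with h0 | h
    · exfalso; rw [h0] at hrL; exact hBsempty _ hr0 hrL
    · exact h
  have hnotN : ∀ i, i < L0 → r i ∉ clNbr G (pathSet p t) := by
    intro i hi hiN
    have hmem : i ∈ A :=
      ⟨r, ⟨fun j hj => hrw.1 j (by omega), fun j hj => hrw.2 j (by omega)⟩, hr0, hiN⟩
    exact absurd (hAmin i hmem) (by omega)
  -- r is injective on [0, L0]
  have hrne : ∀ a b, a < b → b ≤ L0 → r a ≠ r b := by
    intro a b hab hbL heq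
    set d := b - a with hd
    have hdpos : 0 < d := by omega
    have hmem : (L0 - d) ∈ A := by
      refine ⟨fun i => if i ≤ a then r i else r (i + d), ⟨?_, ?_⟩, ?_, ?_⟩
      · intro i hi
        by_cases hia : i ≤ a
        · simpa [hia] using hrw.1 i (by omega)
        · simpa [hia] using hrw.1 (i + d) (by omega)
      · intro i hi
        by_cases hia : i < a
        · show G.Adj (if i ≤ a then r i else r (i + d)) (if i + 1 ≤ a then r (i + 1) else r (i + 1 + d))
          rw [if_pos (by omega : i ≤ a), if_pos (by omega : i + 1 ≤ a)]
          exact hrw.2 i (by omega)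
        · by_cases hia' : i = a
          · subst hia'
            show G.Adj (if i ≤ i then r i else r (i + d)) (if i + 1 ≤ i then r (i + 1) else r (i + 1 + d))
            rw [if_pos le_rfl, if_neg (by omega : ¬ i + 1 ≤ i),
              (show i + 1 + d = b + 1 by omega), heq]
            exact hrw.2 b (by omega)
          · show G.Adj (if i ≤ a then r i else r (i + d)) (if i + 1 ≤ a then r (i + 1) else r (i + 1 + d))
            rw [if_neg (by omega : ¬ i ≤ a), if_neg (by omega : ¬ i + 1 ≤ a),
              (show i + 1 + d = i + d + 1 by omega)]
            exact hrw.2 (i + d) (by omega)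
      · show (if 0 ≤ a then r 0 else r (0 + d)) ∈ Bs
        rw [if_pos (Nat.zero_le a)]
        exact hr0
      · show (if L0 - d ≤ a then r (L0 - d) else r (L0 - d + d)) ∈ clNbr G (pathSet p t)
        by_cases hc : L0 - d ≤ a
        · have hbL0 : b = L0 := by omega
          have ha' : L0 - d = a := by omega
          rw [if_pos hc, ha', heq, hbL0]
          exact hrL
        · rw [if_neg hc, (show L0 - d + d = L0 by omega)]
          exact hrL
    have := hAmin _ hmem
    omega
  -- r is chordless on [0, L0]
  have hrchord : ∀ a b, a + 1 < b → b ≤ L0 → G.Adj (r a) (r b) → False := by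
    intro a b hab hbL hadj
    set d := b - a - 1 with hd
    have hdpos : 0 < d := by omega
    have hmem : (L0 - d) ∈ A := by
      refine ⟨fun i => if i ≤ a then r i else r (i + d), ⟨?_, ?_⟩, ?_, ?_⟩
      · intro i hi
        by_cases hia : i ≤ a
        · simpa [hia] using hrw.1 i (by omega)
        · simpa [hia] using hrw.1 (i + d) (by omega)
      · intro i hi
        by_cases hia : i < a
        · show G.Adj (if i ≤ a then r i else r (i + d)) (if i + 1 ≤ a then r (i + 1) else r (i + 1 + d))
          rw [if_pos (by omega : i ≤ a), if_pos (by omega : i + 1 ≤ a)]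
          exact hrw.2 i (by omega)
        · by_cases hia' : i = a
          · subst hia'
            show G.Adj (if i ≤ i then r i else r (i + d)) (if i + 1 ≤ i then r (i + 1) else r (i + 1 + d))
            rw [if_pos le_rfl, if_neg (by omega : ¬ i + 1 ≤ i),
              (show i + 1 + d = b by omega)]
            exact hadj
          · show G.Adj (if i ≤ a then r i else r (i + d)) (if i + 1 ≤ a then r (i + 1) else r (i + 1 + d))
            rw [if_neg (by omega : ¬ i ≤ a), if_neg (by omega : ¬ i + 1 ≤ a),
              (show i + 1 + d = i + d + 1 by omega)]
            exact hrw.2 (i + d) (by omega)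
      · show (if 0 ≤ a then r 0 else r (0 + d)) ∈ Bs
        rw [if_pos (Nat.zero_le a)]
        exact hr0
      · show (if L0 - d ≤ a then r (L0 - d) else r (L0 - d + d)) ∈ clNbr G (pathSet p t)
        rw [if_neg (by omega : ¬ L0 - d ≤ a), (show L0 - d + d = L0 by omega)]
        exact hrL
    have := hAmin _ hmem
    omega
  have hradj : ∀ a b, a ≤ L0 → b ≤ L0 → (G.Adj (r a) (r b) ↔ (a + 1 = b ∨ b + 1 = a)) := by
    intro a b ha hb
    constructor
    · intro hadj
      rcases Nat.lt_trichotomy a b with h | h | h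
      · rcases Nat.lt_or_ge (a + 1) b with h' | h'
        · exact absurd hadj (fun x => hrchord a b h' hb x)
        · left; omega
      · subst h; exact absurd hadj (G.irrefl)
      · rcases Nat.lt_or_ge (b + 1) a with h' | h'
        · exact absurd hadj.symm (fun x => hrchord b a h' ha x)
        · right; omega
    · intro h
      rcases h with h | h
      · have hh := hrw.2 a (by omega)
        rwa [h] at hh
      · have hh := hrw.2 b (by omega)
        rw [h] at hh
        exact hh.symm
  -- the seam vertex r L0
  have hrLBa : r L0 ∈ Ba := hrw.1 L0 le_rfl
  have hrLnP : r L0 ∉ pathSet p t := by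
    intro hmem
    have hadj : G.Adj (r (L0 - 1)) (r L0) := by
      have hh := hrw.2 (L0 - 1) (by omega)
      rwa [(show L0 - 1 + 1 = L0 by omega)] at hh
    exact hnotN (L0 - 1) (by omega) (sb_mem_clNbr_of_adj hmem hadj)
  obtain ⟨hseam_adj, hseam_not⟩ := hkey (r L0) hrLBa hrL hrLnP
  have hsep : ∀ i, i < L0 → r i ∉ pathSet p t ∧ ∀ x ∈ pathSet p t, ¬ G.Adj (r i) x :=
    fun i hi => sb_notMem_clNbr (hnotN i hi)
  -- the new path g
  set n' := L0 + 1 + t with hn'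
  set g : ℕ → V := fun i => if i ≤ L0 then r i else p (i - (L0 + 1)) with hg
  have hgr : ∀ i, i ≤ L0 → g i = r i := by
    intro i hi; simp [hg, hi]
  have hgq : ∀ i, ¬ i ≤ L0 → g i = p (i - (L0 + 1)) := by
    intro i hi; simp [hg, hi]
  have hgp : ∀ a, a < t → g (L0 + 1 + a) = p a := by
    intro a ha
    rw [hgq _ (by omega)]
    congr 1
    omega
  have hgpath : IsIndPathOn G g n' := by
    constructor
    · intro a b ha hb heq
      by_cases haL : a ≤ L0 <;> by_cases hbL : b ≤ L0
      · rw [hgr a haL, hgr b hbL] at heq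
        rcases Nat.lt_trichotomy a b with h | h | h
        · exact absurd heq (hrne a b h hbL)
        · exact h
        · exact absurd heq.symm (hrne b a h haL)
      · exfalso
        rw [hgr a haL, hgq b hbL] at heq
        have hmem : r a ∈ pathSet p t := ⟨b - (L0 + 1), show b - (L0 + 1) < t by omega, heq.symm⟩
        rcases Nat.lt_or_ge a L0 with h | h
        · exact (hsep a h).1 hmem
        · have haL0 : a = L0 := by omega
          rw [haL0] at hmem
          exact hrLnP hmem
      · exfalso
        rw [hgq a haL, hgr b hbL] at heq
        have hmem : r b ∈ pathSet p t := ⟨a - (L0 + 1), show a - (L0 + 1) < t by omega, heq⟩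
        rcases Nat.lt_or_ge b L0 with h | h
        · exact (hsep b h).1 hmem
        · have hbL0 : b = L0 := by omega
          rw [hbL0] at hmem
          exact hrLnP hmem
      · rw [hgq a haL, hgq b hbL] at heq
        have := hp.1 _ _ (by omega : a - (L0 + 1) < t) (by omega : b - (L0 + 1) < t) heq
        omega
    · have cross : ∀ a b, a ≤ L0 → L0 < b → b < n' →
          (G.Adj (g a) (g b) ↔ (a + 1 = b ∨ b + 1 = a)) := by
        intro a b haL hbL hbn
        have hbt : b - (L0 + 1) < t := by omega
        have hmem : p (b - (L0 + 1)) ∈ pathSet p t := ⟨b - (L0 + 1), hbt, rfl⟩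
        rw [hgr a haL, hgq b (by omega)]
        rcases Nat.lt_or_ge a L0 with h | h
        · constructor
          · intro hadj
            exact absurd hadj ((hsep a h).2 _ hmem)
          · intro hc
            exfalso
            omega
        · have haL0 : a = L0 := by omega
          subst haL0
          by_cases hb1 : b = L0 + 1
          · subst hb1
            rw [(show L0 + 1 - (L0 + 1) = 0 by omega)]
            constructor
            · intro _; left; rfl
            · intro _; exact hseam_adj
          · constructor
            · intro hadj
              exact absurd hadj (hseam_not _ (by omega) hbt)
            · intro hc
              exfalso
              omega
      intro a b ha hb
      by_cases haL : a ≤ L0 <;> by_cases hbL : b ≤ L0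
      · rw [hgr a haL, hgr b hbL]
        exact hradj a b haL hbL
      · exact cross a b haL (by omega) hb
      · constructor
        · intro hadj
          rcases (cross b a hbL (by omega) ha).1 hadj.symm with h | h
          · right; exact h
          · left; exact h
        · intro hc
          have hc' : b + 1 = a ∨ a + 1 = b := by tauto
          exact ((cross b a hbL (by omega) ha).2 hc').symm
      · rw [hgq a haL, hgq b hbL,
          hp.2 _ _ (by omega : a - (L0 + 1) < t) (by omega : b - (L0 + 1) < t)]
        omega
  -- the new path hits strictly more sets: contradiction
  have hgle := hMle g n' (by omega) hgpath
  have hPsub : pathSet p t ⊆ pathSet g n' := by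
    rintro x ⟨a, hat, rfl⟩
    have hat' : a < t := hat
    exact ⟨L0 + 1 + a, show L0 + 1 + a < n' by omega, hgp a hat'⟩
  have hhitsub : sbHit G B p t ⊆ sbHit G B g n' := by
    rintro X ⟨hXB, y, hyN, hyX⟩
    exact ⟨hXB, y, sb_clNbr_mono hPsub hyN, hyX⟩
  have hBsg : Bs ∈ sbHit G B g n' := by
    refine ⟨hBsB, r 0, ?_, hr0⟩
    exact sb_mem_clNbr_of_mem ⟨0, show (0:ℕ) < n' by omega, hgr 0 (Nat.zero_le _)⟩
  have hBsnot : Bs ∉ sbHit G B p t := by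
    rintro ⟨_, y, hyN, hyBs⟩
    exact hBsempty y hyBs hyN
  have hfinal : M + 1 ≤ (sbHit G B g n').ncard := by
    have h1 : insert Bs (sbHit G B p t) ⊆ sbHit G B g n' := by
      intro X hX
      rcases Set.mem_insert_iff.mp hX with rfl | hX'
      · exact hBsg
      · exact hhitsub hX'
    have h2 : (insert Bs (sbHit G B p t)).ncard = M + 1 := by
      rw [Set.ncard_insert_of_notMem hBsnot (Set.toFinite _), hpcard]
    calc M + 1 = (insert Bs (sbHit G B p t)).ncard := h2.symm
      _ ≤ (sbHit G B g n').ncard := Set.ncard_le_ncard h1 (Set.toFinite _)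
  omega
end

section
/- For every positive integer k, every k-rope ladder contains the k-skinny ladder as an induced minor. -/
open SimpleGraph

section MyHelp
variable {V : Type} {G : SimpleGraph V}

variable {V : Type} {G : SimpleGraph V}

lemma not_adj_of_not_setsAdj {X Y : Set V}
    (h : ¬ SetsAdj G X Y) (hd : Disjoint X Y) {u v : V} (hu : u ∈ X) (hv : v ∈ Y) :
    ¬ G.Adj u v := by
  intro hadj
  exact h ⟨v, Or.inr ⟨Set.disjoint_right.mp hd hv, u, hu, hadj.symm⟩, hv⟩

end MyHelp

section MyAux

variable {V : Type} {G : SimpleGraph V}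

lemma xle {k : ℕ} {x : ℕ → ℕ} (hxlt : ∀ i < k, x i < x (i+1)) :
    ∀ i j, i ≤ j → j ≤ k → x i ≤ x j := by
  intro i j hij hjk
  induction j with
  | zero => have : i = 0 := Nat.le_zero.mp hij; simp [this]
  | succ j ih =>
    rcases Nat.lt_or_ge i (j+1) with h | h
    · exact le_trans (ih (by omega) (by omega)) (le_of_lt (hxlt j (by omega)))
    · have : i = j + 1 := by omega
      simp [this]

lemma xlt {k : ℕ} {x : ℕ → ℕ} (hxlt : ∀ i < k, x i < x (i+1)) :
    ∀ i j, i < j → j ≤ k → x i < x j := by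
  intro i j hij hjk
  have h1 : x i ≤ x (j - 1) := xle hxlt i (j-1) (by omega) (by omega)
  have h2 : x (j - 1) < x (j - 1 + 1) := hxlt (j-1) (by omega)
  have e : j - 1 + 1 = j := by omega
  rw [e] at h2
  omega

lemma seg_reach {f : ℕ → V} {n : ℕ} (hf : IsIndPathOn G f n) {a b : ℕ} (hbn : b ≤ n) :
    ∀ s t, a ≤ s → s ≤ t → t < b →
    ∀ (h1 : f s ∈ f '' {t | a ≤ t ∧ t < b}) (h2 : f t ∈ f '' {t | a ≤ t ∧ t < b}),
    (G.induce (f '' {t | a ≤ t ∧ t < b})).Reachable ⟨f s, h1⟩ ⟨f t, h2⟩ := by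
  intro s t hs hst
  induction t, hst using Nat.le_induction with
  | base => intro _ h1 h2; exact Reachable.refl _
  | succ t hst ih =>
    intro htb h1 h2
    have hm : f t ∈ f '' {t | a ≤ t ∧ t < b} := ⟨t, ⟨by omega, by omega⟩, rfl⟩
    have hadj : (G.induce (f '' {t | a ≤ t ∧ t < b})).Adj ⟨f t, hm⟩ ⟨f (t+1), h2⟩ := by
      show G.Adj (f t) (f (t+1))
      exact (hf.2 t (t+1) (by omega) (by omega)).mpr (Or.inl rfl)
    exact (ih (by omega) h1 hm).trans hadj.reachable

lemma seg_connected {f : ℕ → V} {n : ℕ} (hf : IsIndPathOn G f n) {a b : ℕ}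
    (hab : a < b) (hbn : b ≤ n) : (G.induce (f '' {t | a ≤ t ∧ t < b})).Connected := by
  rw [SimpleGraph.connected_iff]
  refine ⟨?_, ⟨⟨f a, ⟨a, ⟨le_rfl, hab⟩, rfl⟩⟩⟩⟩
  rintro ⟨u, hu⟩ ⟨v, hv⟩
  obtain ⟨s, hs, hus⟩ := hu
  obtain ⟨t, ht, hvt⟩ := hv
  have e1 : (⟨u, ⟨s, hs, hus⟩⟩ : (f '' {t | a ≤ t ∧ t < b})) = ⟨f s, ⟨s, hs, rfl⟩⟩ :=
    Subtype.ext hus.symm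
  have e2 : (⟨v, ⟨t, ht, hvt⟩⟩ : (f '' {t | a ≤ t ∧ t < b})) = ⟨f t, ⟨t, ht, rfl⟩⟩ :=
    Subtype.ext hvt.symm
  rw [e1, e2]
  rcases le_total s t with h | h
  · exact seg_reach hf hbn s t hs.1 h ht.2 _ _
  · exact (seg_reach hf hbn t s ht.1 h hs.2 _ _).symm

lemma blk_disjoint {f : ℕ → V} {n : ℕ} (hf : IsIndPathOn G f n) {k : ℕ} {x : ℕ → ℕ}
    (hxk : x k = n) (hxlt : ∀ i < k, x i < x (i+1)) {a b : ℕ} (ha : a < k) (hb : b < k)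
    (hab : a ≠ b) :
    Disjoint (f '' {t | x a ≤ t ∧ t < x (a+1)}) (f '' {t | x b ≤ t ∧ t < x (b+1)}) := by
  rw [Set.disjoint_left]
  rintro u ⟨s, hs, rfl⟩ ⟨t, ht, hft⟩
  simp only [Set.mem_setOf_eq] at hs ht
  have hsn : s < n := lt_of_lt_of_le hs.2 (hxk ▸ xle hxlt (a+1) k (by omega) le_rfl)
  have htn : t < n := lt_of_lt_of_le ht.2 (hxk ▸ xle hxlt (b+1) k (by omega) le_rfl)
  have hst : t = s := hf.1 t s htn hsn hft
  rcases Nat.lt_or_ge a b with h | h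
  · have := xle hxlt (a+1) b (by omega) (by omega); omega
  · have := xle hxlt (b+1) a (by omega) (by omega); omega

lemma blk_nonadj {f : ℕ → V} {n : ℕ} (hf : IsIndPathOn G f n) {k : ℕ} {x : ℕ → ℕ}
    (hxk : x k = n) (hxlt : ∀ i < k, x i < x (i+1)) {a b : ℕ} (ha : a < k) (hb : b < k)
    (h1 : a + 1 ≠ b) (h2 : b + 1 ≠ a) (hab : a ≠ b) :
    ¬ ∃ u ∈ f '' {t | x a ≤ t ∧ t < x (a+1)}, ∃ v ∈ f '' {t | x b ≤ t ∧ t < x (b+1)},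
      G.Adj u v := by
  rintro ⟨u, ⟨s, hs, rfl⟩, v, ⟨t, ht, rfl⟩, hadj⟩
  simp only [Set.mem_setOf_eq] at hs ht
  have hsn : s < n := lt_of_lt_of_le hs.2 (hxk ▸ xle hxlt (a+1) k (by omega) le_rfl)
  have htn : t < n := lt_of_lt_of_le ht.2 (hxk ▸ xle hxlt (b+1) k (by omega) le_rfl)
  have hc := (hf.2 s t hsn htn).mp hadj
  rcases Nat.lt_or_ge a b with h | h
  · have := xlt hxlt (a+1) b (by omega) (by omega); omega
  · have := xlt hxlt (b+1) a (by omega) (by omega); omega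

lemma blk_adj_consec {f : ℕ → V} {n : ℕ} (hf : IsIndPathOn G f n) {k : ℕ} {x : ℕ → ℕ}
    (hxk : x k = n) (hxlt : ∀ i < k, x i < x (i+1)) {a b : ℕ} (hab : a + 1 = b)
    (hb : b < k) :
    ∃ u ∈ f '' {t | x a ≤ t ∧ t < x (a+1)}, ∃ v ∈ f '' {t | x b ≤ t ∧ t < x (b+1)},
      G.Adj u v := by
  subst hab
  have h1 : x a < x (a+1) := hxlt a (by omega)
  have h2 : x (a+1) < x (a+1+1) := hxlt (a+1) hb
  have hn : x (a+1+1) ≤ n := hxk ▸ xle hxlt (a+1+1) k (by omega) le_rfl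
  refine ⟨f (x (a+1) - 1), ⟨x (a+1) - 1, ⟨by omega, by omega⟩, rfl⟩,
    f (x (a+1)), ⟨x (a+1), ⟨le_rfl, by omega⟩, rfl⟩, ?_⟩
  exact (hf.2 _ _ (by omega) (by omega)).mpr (Or.inl (by omega))

end MyAux

lemma fin2_em (i : Fin 2) : i = 0 ∨ i = 1 := by
  fin_cases i
  · exact Or.inl rfl
  · exact Or.inr rfl

lemma skinny_adj_inl_inl {k : ℕ} (i j : Fin 2) (a b : Fin k) :
    (skinnyLadder k).Adj (Sum.inl (i,a)) (Sum.inl (j,b)) ↔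
      i = j ∧ (a.val + 1 = b.val ∨ b.val + 1 = a.val) := by
  rw [skinnyLadder, SimpleGraph.fromRel_adj]
  constructor
  · rintro ⟨hne, h | h⟩
    · exact ⟨h.1, Or.inl h.2⟩
    · exact ⟨h.1.symm, Or.inr h.2⟩
  · rintro ⟨rfl, h | h⟩
    · refine ⟨?_, Or.inl ⟨rfl, h⟩⟩
      intro hEq
      simp only [Sum.inl.injEq, Prod.mk.injEq, true_and] at hEq
      rw [hEq] at h; omega
    · refine ⟨?_, Or.inr ⟨rfl, h⟩⟩
      intro hEq
      simp only [Sum.inl.injEq, Prod.mk.injEq, true_and] at hEq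
      rw [hEq] at h; omega

lemma skinny_adj_inl_inr {k : ℕ} (i : Fin 2) (a b : Fin k) :
    (skinnyLadder k).Adj (Sum.inl (i,a)) (Sum.inr b) ↔ a = b := by
  rw [skinnyLadder, SimpleGraph.fromRel_adj]
  constructor
  · rintro ⟨hne, h | h⟩
    · exact h
    · exact h.elim
  · rintro rfl
    exact ⟨by simp, Or.inl rfl⟩

lemma skinny_not_adj_inr_inr {k : ℕ} (a b : Fin k) :
    ¬ (skinnyLadder k).Adj (Sum.inr a) (Sum.inr b) := by
  rw [skinnyLadder, SimpleGraph.fromRel_adj]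
  rintro ⟨hne, h | h⟩ <;> exact h


/-- every `k`-rope ladder contains the `k`-skinny ladder as an induced
minor. -/
theorem skinnyLadder_inducedMinor_of_ropeLadder (k : ℕ) (hk : 1 ≤ k)
    (V : Type) (G : SimpleGraph V) (hG : IsRopeLadderGraph G k) :
    InducedMinor G (skinnyLadder k) := by
  obtain ⟨L, ⟨hsh, h1, h2⟩, -⟩ := hG
  obtain ⟨hA1ne, x1, hx10, hx1k, hx1lt, hx1sub⟩ := h1
  obtain ⟨hA2ne, x2, hx20, hx2k, hx2lt, hx2sub⟩ := h2
  have hp1 := hsh.path₁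
  have hp2 := hsh.path₂
  have hsub1 : ∀ a, a < k → L.p₁ '' {t | x1 a ≤ t ∧ t < x1 (a+1)} ⊆ L.rail₁ := by
    intro a ha v hv
    obtain ⟨t, ht, rfl⟩ := hv
    exact ⟨t, lt_of_lt_of_le ht.2 (hx1k ▸ xle hx1lt (a+1) k ha le_rfl), rfl⟩
  have hsub2 : ∀ a, a < k → L.p₂ '' {t | x2 a ≤ t ∧ t < x2 (a+1)} ⊆ L.rail₂ := by
    intro a ha v hv
    obtain ⟨t, ht, rfl⟩ := hv
    exact ⟨t, lt_of_lt_of_le ht.2 (hx2k ▸ xle hx2lt (a+1) k ha le_rfl), rfl⟩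
  have htopmem : ∀ i, i < k → L.top i ∈ L.rung i := fun i hi => ⟨0, hsh.posm i hi, rfl⟩
  have hbotmem : ∀ i, i < k → L.bot i ∈ L.rung i := by
    intro i hi
    exact ⟨L.m i - 1, by have := hsh.posm i hi; simp only [Set.mem_setOf_eq]; omega, rfl⟩
  have hadjR1 : ∀ i, i < k → ∃ u ∈ L.p₁ '' {t | x1 i ≤ t ∧ t < x1 (i+1)},
      ∃ v ∈ L.rung i, G.Adj u v := by
    intro i hi
    obtain ⟨v, hv⟩ := hsh.rung₁ne i hi
    rw [hsh.rung₁eq i hi] at hv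
    refine ⟨v, hx1sub i hi hv, L.top i, htopmem i hi, ?_⟩
    obtain ⟨⟨-, w, hw, hadj⟩, -⟩ := hv
    rwa [Set.mem_singleton_iff.mp hw] at hadj
  have hadjR2 : ∀ i, i < k → ∃ u ∈ L.p₂ '' {t | x2 i ≤ t ∧ t < x2 (i+1)},
      ∃ v ∈ L.rung i, G.Adj u v := by
    intro i hi
    obtain ⟨v, hv⟩ := hsh.rung₂ne i hi
    rw [hsh.rung₂eq i hi] at hv
    refine ⟨v, hx2sub i hi hv, L.bot i, hbotmem i hi, ?_⟩
    obtain ⟨⟨-, w, hw, hadj⟩, -⟩ := hv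
    rwa [Set.mem_singleton_iff.mp hw] at hadj
  have hnonR1 : ∀ a, a < k → ∀ i, i < k → a ≠ i →
      ∀ u ∈ L.p₁ '' {t | x1 a ≤ t ∧ t < x1 (a+1)}, ∀ w ∈ L.rung i, ¬ G.Adj u w := by
    intro a ha i hi hne u hu w hw hadj
    have hur : u ∈ L.rail₁ := hsub1 a ha hu
    have hunr : u ∉ L.rung i := Set.disjoint_left.mp (hsh.disj₁r i hi) hur
    have humem : u ∈ nbr G (L.rung i) ∩ L.rail₁ := ⟨⟨hunr, w, hw, hadj⟩, hur⟩
    rw [hsh.rung₁eq i hi] at humem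
    exact Set.disjoint_left.mp (blk_disjoint hp1 hx1k hx1lt ha hi hne) hu
      (hx1sub i hi humem)
  have hnonR2 : ∀ a, a < k → ∀ i, i < k → a ≠ i →
      ∀ u ∈ L.p₂ '' {t | x2 a ≤ t ∧ t < x2 (a+1)}, ∀ w ∈ L.rung i, ¬ G.Adj u w := by
    intro a ha i hi hne u hu w hw hadj
    have hur : u ∈ L.rail₂ := hsub2 a ha hu
    have hunr : u ∉ L.rung i := Set.disjoint_left.mp (hsh.disj₂r i hi) hur
    have humem : u ∈ nbr G (L.rung i) ∩ L.rail₂ := ⟨⟨hunr, w, hw, hadj⟩, hur⟩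
    rw [hsh.rung₂eq i hi] at humem
    exact Set.disjoint_left.mp (blk_disjoint hp2 hx2k hx2lt ha hi hne) hu
      (hx2sub i hi humem)
  have hnonRR : ∀ i, i < k → ∀ j, j < k → i ≠ j →
      ∀ u ∈ L.rung i, ∀ v ∈ L.rung j, ¬ G.Adj u v :=
    fun i hi j hj hne u hu v hv =>
      not_adj_of_not_setsAdj (hsh.nonadjrr i hi j hj hne) (hsh.disjrr i hi j hj hne) hu hv
  have hnon12 : ∀ u ∈ L.rail₁, ∀ v ∈ L.rail₂, ¬ G.Adj u v :=
    fun u hu v hv => not_adj_of_not_setsAdj hsh.nonadj₁₂ hsh.disj₁₂ hu hv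
  have hrungset : ∀ i, L.rung i = L.φ i '' {t | 0 ≤ t ∧ t < L.m i} := by
    intro i
    unfold RopeLadderData.rung pathSet
    congr 1
    ext t
    simp
  have hconnR : ∀ i, i < k → (G.induce (L.rung i)).Connected := by
    intro i hi
    rw [hrungset i]
    exact seg_connected (hsh.pathr i hi) (hsh.posm i hi) le_rfl
  refine ⟨fun w => match w with
    | Sum.inl (i, a) =>
        if i = 0 then L.p₁ '' {t | x1 a.val ≤ t ∧ t < x1 (a.val+1)}
        else L.p₂ '' {t | x2 a.val ≤ t ∧ t < x2 (a.val+1)}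
    | Sum.inr a => L.rung a.val, ?_, ?_, ?_⟩
  · rintro (⟨i, a⟩ | a)
    · rcases fin2_em i with rfl | rfl <;> dsimp only <;> try simp only [reduceIte]
      · exact seg_connected hp1 (hx1lt a.val a.isLt)
          (hx1k ▸ xle hx1lt (a.val+1) k a.isLt le_rfl)
      · exact seg_connected hp2 (hx2lt a.val a.isLt)
          (hx2k ▸ xle hx2lt (a.val+1) k a.isLt le_rfl)
    · exact hconnR a.val a.isLt
  · rintro (⟨i, a⟩ | a) (⟨j, b⟩ | b) hne
    · rcases fin2_em i with rfl | rfl <;> rcases fin2_em j with rfl | rfl <;>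
        dsimp only <;> try simp only [reduceIte]
      · have hab : a ≠ b := by rintro rfl; exact hne rfl
        exact blk_disjoint hp1 hx1k hx1lt a.isLt b.isLt (fun h => hab (Fin.ext h))
      · exact Disjoint.mono (hsub1 a.val a.isLt) (hsub2 b.val b.isLt) hsh.disj₁₂
      · exact Disjoint.mono (hsub2 a.val a.isLt) (hsub1 b.val b.isLt) hsh.disj₁₂.symm
      · have hab : a ≠ b := by rintro rfl; exact hne rfl
        exact blk_disjoint hp2 hx2k hx2lt a.isLt b.isLt (fun h => hab (Fin.ext h))
    · rcases fin2_em i with rfl | rfl <;> dsimp only <;> try simp only [reduceIte]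
      · exact Disjoint.mono (hsub1 a.val a.isLt) le_rfl (hsh.disj₁r b.val b.isLt)
      · exact Disjoint.mono (hsub2 a.val a.isLt) le_rfl (hsh.disj₂r b.val b.isLt)
    · rcases fin2_em j with rfl | rfl <;> dsimp only <;> try simp only [reduceIte]
      · exact (Disjoint.mono (hsub1 b.val b.isLt) le_rfl (hsh.disj₁r a.val a.isLt)).symm
      · exact (Disjoint.mono (hsub2 b.val b.isLt) le_rfl (hsh.disj₂r a.val a.isLt)).symm
    · have hab : a ≠ b := by rintro rfl; exact hne rfl
      exact hsh.disjrr a.val a.isLt b.val b.isLt (fun h => hab (Fin.ext h))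
  · rintro (⟨i, a⟩ | a) (⟨j, b⟩ | b) hne
    · rw [skinny_adj_inl_inl]
      rcases fin2_em i with rfl | rfl <;> rcases fin2_em j with rfl | rfl <;>
        dsimp only <;> try simp only [reduceIte]
      · have hab : a ≠ b := by rintro rfl; exact hne rfl
        constructor
        · rintro ⟨-, h | h⟩
          · exact blk_adj_consec hp1 hx1k hx1lt h b.isLt
          · obtain ⟨u, hu, v, hv, hadj⟩ := blk_adj_consec hp1 hx1k hx1lt h a.isLt
            exact ⟨v, hv, u, hu, hadj.symm⟩
        · intro hex
          refine ⟨by trivial, ?_⟩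
          by_contra hcon
          push_neg at hcon
          exact blk_nonadj hp1 hx1k hx1lt a.isLt b.isLt hcon.1 hcon.2
            (fun h => hab (Fin.ext h)) hex
      · constructor
        · rintro ⟨h, -⟩; exact absurd h (by decide)
        · rintro ⟨u, hu, v, hv, hadj⟩
          exact absurd hadj (hnon12 u (hsub1 a.val a.isLt hu) v (hsub2 b.val b.isLt hv))
      · constructor
        · rintro ⟨h, -⟩; exact absurd h (by decide)
        · rintro ⟨u, hu, v, hv, hadj⟩
          exact absurd hadj.symm (hnon12 v (hsub1 b.val b.isLt hv) u (hsub2 a.val a.isLt hu))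
      · have hab : a ≠ b := by rintro rfl; exact hne rfl
        constructor
        · rintro ⟨-, h | h⟩
          · exact blk_adj_consec hp2 hx2k hx2lt h b.isLt
          · obtain ⟨u, hu, v, hv, hadj⟩ := blk_adj_consec hp2 hx2k hx2lt h a.isLt
            exact ⟨v, hv, u, hu, hadj.symm⟩
        · intro hex
          refine ⟨by trivial, ?_⟩
          by_contra hcon
          push_neg at hcon
          exact blk_nonadj hp2 hx2k hx2lt a.isLt b.isLt hcon.1 hcon.2
            (fun h => hab (Fin.ext h)) hex
    · rw [skinny_adj_inl_inr]
      rcases fin2_em i with rfl | rfl <;> dsimp only <;> try simp only [reduceIte]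
      · constructor
        · rintro rfl; exact hadjR1 a.val a.isLt
        · rintro ⟨u, hu, v, hv, hadj⟩
          by_contra hab
          exact hnonR1 a.val a.isLt b.val b.isLt (fun h => hab (Fin.ext h)) u hu v hv hadj
      · constructor
        · rintro rfl; exact hadjR2 a.val a.isLt
        · rintro ⟨u, hu, v, hv, hadj⟩
          by_contra hab
          exact hnonR2 a.val a.isLt b.val b.isLt (fun h => hab (Fin.ext h)) u hu v hv hadj
    · rw [SimpleGraph.adj_comm, skinny_adj_inl_inr]
      rcases fin2_em j with rfl | rfl <;> dsimp only <;> try simp only [reduceIte]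
      · constructor
        · rintro rfl
          obtain ⟨u, hu, v, hv, hadj⟩ := hadjR1 b.val b.isLt
          exact ⟨v, hv, u, hu, hadj.symm⟩
        · rintro ⟨u, hu, v, hv, hadj⟩
          by_contra hab
          exact hnonR1 b.val b.isLt a.val a.isLt (fun h => hab (Fin.ext h)) v hv u hu hadj.symm
      · constructor
        · rintro rfl
          obtain ⟨u, hu, v, hv, hadj⟩ := hadjR2 b.val b.isLt
          exact ⟨v, hv, u, hu, hadj.symm⟩
        · rintro ⟨u, hu, v, hv, hadj⟩
          by_contra hab
          exact hnonR2 b.val b.isLt a.val a.isLt (fun h => hab (Fin.ext h)) v hv u hu hadj.symm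
    · have hab : a ≠ b := by rintro rfl; exact hne rfl
      constructor
      · intro h; exact absurd h (skinny_not_adj_inr_inr a b)
      · rintro ⟨u, hu, v, hv, hadj⟩
        exact absurd hadj (hnonRR a.val a.isLt b.val b.isLt (fun h => hab (Fin.ext h)) u hu v hv)
end
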